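/- arXiv:cs/0102009 — 3 statements merged into one kernel-verified Lean document; each statement's English description precedes it below -/
import Mathlib

section
/- Let G=(A,B,E) be a bipartite graph with |A| ≥ 2 and |B| ≥ 2 such that C1(G) = 0, C2(G) = 1, and C3(G) > 0, i.e., every connected component of G is an isolated edge or a block, exactly one component is an isolated edge, and at least one component is a nonsingular block. Then B(G) = 2. -/
open SimpleGraph

namespace AugBic

noncomputable section

variable {V : Type*}

/-- Two vertices are biconnected: they are in the same connected component and remain so
after the removal of any single edge or any single vertex other than either of them. -/
def BiconnPair (G : SimpleGraph V) (u v : V) : Prop :=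
  G.Reachable u v ∧
  (∀ e ∈ G.edgeSet, (G.deleteEdges {e}).Reachable u v) ∧
  (∀ w : V, ∀ hu : u ≠ w, ∀ hv : v ≠ w,
    (G.induce {x | x ≠ w}).Reachable ⟨u, hu⟩ ⟨v, hv⟩)

/-- A set of vertices is biconnected if every pair of its vertices is biconnected. -/
def BiconnSet (G : SimpleGraph V) (S : Set V) : Prop :=
  ∀ u ∈ S, ∀ v ∈ S, BiconnPair G u v

/-- A block: (the induced subgraph on) a maximal biconnected set of vertices. -/
def IsBlock (G : SimpleGraph V) (S : Set V) : Prop :=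
  S.Nonempty ∧ BiconnSet G S ∧ ∀ T : Set V, S ⊆ T → BiconnSet G T → T = S

/-- A cut vertex: its removal increases the number of connected components. -/
def IsCutVertex (G : SimpleGraph V) (v : V) : Prop :=
  Nat.card G.ConnectedComponent <
    Nat.card ((G.induce {x | x ≠ v}).ConnectedComponent)

/-- A cut edge: its removal increases the number of connected components. -/
def IsCutEdge (G : SimpleGraph V) (e : Sym2 V) : Prop :=
  e ∈ G.edgeSet ∧
    Nat.card G.ConnectedComponent <
      Nat.card ((G.deleteEdges {e}).ConnectedComponent)

/-- A pendant block: a singular block consisting of a vertex of degree 1, or a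
nonsingular block containing exactly one cut vertex. -/
def IsPendantBlock (G : SimpleGraph V) (S : Set V) : Prop :=
  IsBlock G S ∧
    ((∃ v, S = {v} ∧ (G.neighborSet v).ncard = 1) ∨
     (1 < S.ncard ∧ ∃! v, v ∈ S ∧ IsCutVertex G v))

/-- Λ(G): the set of pendant blocks of `G`. -/
def pendantBlocks (G : SimpleGraph V) : Set (Set V) :=
  {S | IsPendantBlock G S}

/-- A block is of type `P` (for `P = A` or `P = B`) if all its noncut vertices lie in `P`. -/
def TypeOnly (G : SimpleGraph V) (P : Set V) (S : Set V) : Prop :=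
  ∀ v ∈ S, ¬IsCutVertex G v → v ∈ P

/-- A block is type AB if it has a noncut vertex in `A` and a noncut vertex in `B`. -/
def TypeAB (G : SimpleGraph V) (A B : Set V) (S : Set V) : Prop :=
  (∃ v ∈ S, ¬IsCutVertex G v ∧ v ∈ A) ∧ (∃ v ∈ S, ¬IsCutVertex G v ∧ v ∈ B)

/-- A legal pair: two distinct pendant blocks, not both of type A and not both of type B. -/
def LegalPair (G : SimpleGraph V) (A B : Set V) (S T : Set V) : Prop :=
  IsPendantBlock G S ∧ IsPendantBlock G T ∧ S ≠ T ∧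
  ¬(TypeOnly G A S ∧ TypeOnly G A T) ∧ ¬(TypeOnly G B S ∧ TypeOnly G B T)

/-- A legal edge: a vertex pair in `A × B` that is not an edge of `G`. -/
def LegalEdge (G : SimpleGraph V) (A B : Set V) (a b : V) : Prop :=
  a ∈ A ∧ b ∈ B ∧ ¬G.Adj a b

/-- A binding edge for a legal pair: a legal edge joining two noncut vertices,
one from each block of the pair. -/
def BindingEdge (G : SimpleGraph V) (A B : Set V) (S T : Set V) (a b : V) : Prop :=
  LegalEdge G A B a b ∧
  ((a ∈ S ∧ ¬IsCutVertex G a ∧ b ∈ T ∧ ¬IsCutVertex G b) ∨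
   (a ∈ T ∧ ¬IsCutVertex G a ∧ b ∈ S ∧ ¬IsCutVertex G b))

/-- A legal matching of a set `Λ'` of pendant blocks: a set of legal pairs between elements
of `Λ'` such that each element of `Λ'` belongs to at most one pair. -/
def IsLegalMatching (G : SimpleGraph V) (A B : Set V) (Λ' : Set (Set V))
    (N : Set (Set V × Set V)) : Prop :=
  (∀ q ∈ N, q.1 ∈ Λ' ∧ q.2 ∈ Λ' ∧ LegalPair G A B q.1 q.2) ∧
  (∀ q ∈ N, ∀ q' ∈ N, q ≠ q' →
    ({q.1, q.2} ∩ {q'.1, q'.2} : Set (Set V)) = ∅)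

/-- M(Λ'): the maximum cardinality of a legal matching of `Λ'`. -/
def maxMatching (G : SimpleGraph V) (A B : Set V) (Λ' : Set (Set V)) : ℕ :=
  sSup {k | ∃ N, IsLegalMatching G A B Λ' N ∧ N.ncard = k}

/-- R(Λ') = |Λ'| − 2·M(Λ'). -/
def Rnum (G : SimpleGraph V) (A B : Set V) (Λ' : Set (Set V)) : ℕ :=
  Λ'.ncard - 2 * maxMatching G A B Λ'

/-- A graph is componentwise biconnected if every connected component is a block. -/
def ComponentwiseBiconnected (G : SimpleGraph V) : Prop :=
  ∀ c : G.ConnectedComponent, IsBlock G c.supp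

/-- D(G,u): the number of connected components of X − {u}, where X is the
connected component of G containing u. -/
def Dnum (G : SimpleGraph V) (u : V) : ℕ :=
  Nat.card ((G.induce {v | G.Reachable u v ∧ v ≠ u}).ConnectedComponent)

/-- C(G): the number of connected components of G that are not blocks. -/
def Cnum (G : SimpleGraph V) : ℕ :=
  Nat.card {c : G.ConnectedComponent // ¬IsBlock G c.supp}

/-- η(G) = max{ max_u D(G,u) + C(G) − 2, M(Λ(G)) + R(Λ(G)) }. -/
def eta (G : SimpleGraph V) (A B : Set V) : ℕ :=
  max ((⨆ u : V, Dnum G u) + Cnum G - 2)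
      (maxMatching G A B (pendantBlocks G) + Rnum G A B (pendantBlocks G))

/-- A biconnector: a set of legal edges whose addition makes `G` componentwise biconnected. -/
def IsBiconnector (G : SimpleGraph V) (A B : Set V) (L : Set (Sym2 V)) : Prop :=
  (∀ e ∈ L, ∃ a b : V, e = s(a, b) ∧ LegalEdge G A B a b) ∧
  ComponentwiseBiconnected (G ⊔ SimpleGraph.fromEdgeSet L)

/-- B(G): the minimum number of edges of a biconnector of `G`. -/
def Bnum (G : SimpleGraph V) (A B : Set V) : ℕ :=
  sInf {k | ∃ L, IsBiconnector G A B L ∧ L.ncard = k}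

/-- A connected component is an isolated edge. -/
def IsIsolatedEdgeComp (G : SimpleGraph V) (c : G.ConnectedComponent) : Prop :=
  ∃ u v : V, G.Adj u v ∧ c.supp = {u, v}

/-- C1(G): the number of components that are neither isolated edges nor blocks. -/
def C1num (G : SimpleGraph V) : ℕ :=
  Nat.card {c : G.ConnectedComponent // ¬IsIsolatedEdgeComp G c ∧ ¬IsBlock G c.supp}

/-- C2(G): the number of isolated-edge components. -/
def C2num (G : SimpleGraph V) : ℕ :=
  Nat.card {c : G.ConnectedComponent // IsIsolatedEdgeComp G c}

/-- C3(G): the number of components that are nonsingular blocks. -/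
def C3num (G : SimpleGraph V) : ℕ :=
  Nat.card {c : G.ConnectedComponent // IsBlock G c.supp ∧ 1 < c.supp.ncard}

/-- A cut vertex `u` is critical if D(G,u) − 1 = M(Λ(G)) + R(Λ(G)). -/
def Critical (G : SimpleGraph V) (A B : Set V) (u : V) : Prop :=
  IsCutVertex G u ∧
    Dnum G u - 1 = maxMatching G A B (pendantBlocks G) + Rnum G A B (pendantBlocks G)

/-- A cut vertex `u` is massive if D(G,u) − 1 > M(Λ(G)) + R(Λ(G)). -/
def Massive (G : SimpleGraph V) (A B : Set V) (u : V) : Prop :=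
  IsCutVertex G u ∧
    maxMatching G A B (pendantBlocks G) + Rnum G A B (pendantBlocks G) < Dnum G u - 1

/-- Vertices of the block tree: blocks (b-vertices), cut vertices and cut edges (c-vertices). -/
inductive BTV (V : Type*) where
  | blk : Set V → BTV V
  | cv : V → BTV V
  | ce : Sym2 V → BTV V

/-- Valid vertices of the block tree of `G`: nonsingular blocks and singular pendant blocks
(b-vertices), together with cut vertices and cut edges (c-vertices). -/
def IsBTVert (G : SimpleGraph V) : BTV V → Prop
  | .blk S => IsBlock G S ∧ (1 < S.ncard ∨ ∃ v, S = {v} ∧ (G.neighborSet v).ncard = 1)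
  | .cv v => IsCutVertex G v
  | .ce e => IsCutEdge G e

/-- Adjacency of the block tree: a nonsingular block is joined to each cut vertex in it,
a cut vertex to each cut edge incident to it, and a cut edge to each singular (pendant)
block containing one of its endpoints. -/
def btAdj (G : SimpleGraph V) : BTV V → BTV V → Prop
  | .blk _, .blk _ => False
  | .blk S, .cv c => 1 < S.ncard ∧ c ∈ S
  | .blk S, .ce e => ∃ v, S = {v} ∧ v ∈ e
  | .cv c, .blk S => 1 < S.ncard ∧ c ∈ S
  | .cv _, .cv _ => False
  | .cv c, .ce e => c ∈ e
  | .ce e, .blk S => ∃ v, S = {v} ∧ v ∈ e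
  | .ce e, .cv c => c ∈ e
  | .ce _, .ce _ => False

/-- The vertex type of the block tree Ψ(G). -/
abbrev BTVert (G : SimpleGraph V) := {x : BTV V // IsBTVert G x}

/-- The block tree Ψ(G). -/
def blockTree (G : SimpleGraph V) : SimpleGraph (BTVert G) where
  Adj x y := btAdj G x.1 y.1
  symm := by
    constructor
    rintro ⟨x, hx⟩ ⟨y, hy⟩ h
    cases x <;> cases y <;> simp_all [btAdj]
  loopless := by
    constructor
    rintro ⟨x, hx⟩ h
    cases x <;> simp_all [btAdj]

/-- Degree of a vertex of the block tree. -/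
def btDeg (G : SimpleGraph V) (x : BTVert G) : ℕ :=
  Nat.card ((blockTree G).neighborSet x)

/-- A path is branchless if all its internal vertices have degree two. -/
def Branchless {W : Type*} (T : SimpleGraph W) {x y : W} (p : T.Walk x y) : Prop :=
  p.IsPath ∧ ∀ z ∈ p.support, z ≠ x → z ≠ y → Nat.card (T.neighborSet z) = 2

/-- A leaf clings to a vertex `v` if there is a branchless path between it and `v`. -/
def Clings {W : Type*} (T : SimpleGraph W) (l v : W) : Prop :=
  ∃ p : T.Walk l v, Branchless T p


/-! ### Auxiliary lemmas -/

lemma biconnPair_mono {G G' : SimpleGraph V} (h : G ≤ G') {x y : V}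
    (hp : BiconnPair G x y) : BiconnPair G' x y := by
  obtain ⟨h1, h2, h3⟩ := hp
  refine ⟨h1.mono h, ?_, ?_⟩
  · intro e he
    by_cases heG : e ∈ G.edgeSet
    · refine (h2 e heG).mono (fun a b hab => ?_)
      rw [deleteEdges_adj] at hab ⊢
      exact ⟨h hab.1, hab.2⟩
    · refine h1.mono (fun a b hab => ?_)
      rw [deleteEdges_adj]
      refine ⟨h hab, fun hc => heG ?_⟩
      simp only [Set.mem_singleton_iff] at hc
      exact hc ▸ (G.mem_edgeSet.2 hab)
  · intro w hu hv
    exact (h3 w hu hv).mono (fun a b hab => h hab)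

lemma isBlock_supp {G : SimpleGraph V} (c : G.ConnectedComponent)
    (h : BiconnSet G c.supp) : IsBlock G c.supp := by
  obtain ⟨v0, hv0⟩ := c.exists_rep
  have hv0m : v0 ∈ c.supp := by rw [ConnectedComponent.mem_supp_iff]; exact hv0
  refine ⟨⟨v0, hv0m⟩, h, ?_⟩
  intro T hsub hT
  refine Set.Subset.antisymm (fun t ht => ?_) hsub
  have hr : G.Reachable v0 t := (hT v0 (hsub hv0m) t ht).1
  rw [ConnectedComponent.mem_supp_iff, ← hv0]
  exact (ConnectedComponent.eq.mpr hr).symm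

lemma first_step {H : SimpleGraph V} {u v : V} (hne : u ≠ v) (r : H.Reachable u v) :
    ∃ z, H.Adj u z := by
  obtain ⟨w⟩ := r
  cases w with
  | nil => exact absurd rfl hne
  | cons h p => exact ⟨_, h⟩

lemma not_reach_del {G : SimpleGraph V} {u v : V} (huv : u ≠ v)
    (hnb : ∀ z, G.Adj u z → z = v) :
    ¬ (G.deleteEdges {s(u,v)}).Reachable u v := by
  intro r
  obtain ⟨z, hz⟩ := first_step huv r
  rw [deleteEdges_adj] at hz
  exact hz.2 (by rw [hnb _ hz.1]; rfl)
theorem stmt_11 [Fintype V] (G : SimpleGraph V) (A B : Set V)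
    (hdisj : Disjoint A B) (hcov : A ∪ B = Set.univ)
    (hbip : ∀ u v : V, G.Adj u v → (u ∈ A ∧ v ∈ B) ∨ (u ∈ B ∧ v ∈ A))
    (hA : 2 ≤ A.ncard) (hB : 2 ≤ B.ncard)
    (hC1 : C1num G = 0) (hC2 : C2num G = 1) (hC3 : 0 < C3num G) :
    Bnum G A B = 2 := by
  classical
  -- the isolated-edge component
  obtain ⟨⟨c0, hc0iso⟩⟩ : Nonempty {c : G.ConnectedComponent // IsIsolatedEdgeComp G c} := by
    obtain ⟨a, -⟩ := Nat.card_eq_one_iff_exists.mp hC2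
    exact ⟨a⟩
  obtain ⟨u0, v0, huv0, hsupp0⟩ := id hc0iso
  obtain ⟨u, v, huv, hsupp, huA, hvB⟩ :
      ∃ u v, G.Adj u v ∧ c0.supp = {u, v} ∧ u ∈ A ∧ v ∈ B := by
    rcases hbip u0 v0 huv0 with ⟨h1, h2⟩ | ⟨h1, h2⟩
    · exact ⟨u0, v0, huv0, hsupp0, h1, h2⟩
    · exact ⟨v0, u0, huv0.symm, by rw [hsupp0, Set.pair_comm], h2, h1⟩
  have hne : u ≠ v := huv.ne
  have hmku : G.connectedComponentMk u = c0 := by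
    rw [← ConnectedComponent.mem_supp_iff, hsupp]; exact Set.mem_insert _ _
  have hmkv : G.connectedComponentMk v = c0 := by
    rw [← ConnectedComponent.mem_supp_iff, hsupp]; exact Set.mem_insert_of_mem _ rfl
  have hnbu : ∀ z, G.Adj u z → z = v := by
    intro z hz
    have hzm : z ∈ c0.supp := by
      rw [ConnectedComponent.mem_supp_iff, ← hmku]
      exact ConnectedComponent.sound hz.reachable.symm
    rw [hsupp] at hzm
    simp only [Set.mem_insert_iff, Set.mem_singleton_iff] at hzm
    rcases hzm with rfl | rfl
    · exact absurd hz (G.loopless.irrefl _)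
    · rfl
  have hnbv : ∀ z, G.Adj v z → z = u := by
    intro z hz
    have hzm : z ∈ c0.supp := by
      rw [ConnectedComponent.mem_supp_iff, ← hmkv]
      exact ConnectedComponent.sound hz.reachable.symm
    rw [hsupp] at hzm
    simp only [Set.mem_insert_iff, Set.mem_singleton_iff] at hzm
    rcases hzm with rfl | rfl
    · rfl
    · exact absurd hz (G.loopless.irrefl _)
  -- a nonsingular block component
  obtain ⟨⟨d, hdblock, hdcard⟩⟩ :
      Nonempty {c : G.ConnectedComponent // IsBlock G c.supp ∧ 1 < c.supp.ncard} :=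
    (Nat.card_pos_iff.mp hC3).1
  have hdbc : BiconnSet G d.supp := hdblock.2.1
  have hSreach : ∀ s ∈ d.supp, ∀ t ∈ d.supp, G.Reachable s t := by
    intro s hs t ht
    rw [ConnectedComponent.mem_supp_iff] at hs ht
    exact ConnectedComponent.eq.mp (hs.trans ht.symm)
  have hdne : d ≠ c0 := by
    intro h
    have huS : u ∈ d.supp := by rw [h, hsupp]; exact Set.mem_insert _ _
    have hvS : v ∈ d.supp := by rw [h, hsupp]; exact Set.mem_insert_of_mem _ rfl
    exact not_reach_del hne hnbu ((hdbc u huS v hvS).2.1 s(u,v) (G.mem_edgeSet.mpr huv))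
  have huNS : u ∉ d.supp := by
    intro h
    exact hdne (by rw [← (ConnectedComponent.mem_supp_iff _ _).mp h]; exact hmku)
  have hvNS : v ∉ d.supp := by
    intro h
    exact hdne (by rw [← (ConnectedComponent.mem_supp_iff _ _).mp h]; exact hmkv)
  -- pick a' ∈ S ∩ A, b' ∈ S ∩ B
  obtain ⟨s1, t1, hs1, ht1, hst1⟩ := (Set.one_lt_ncard_iff d.supp.toFinite).mp hdcard
  obtain ⟨z1, hz1⟩ := first_step hst1 (hSreach s1 hs1 t1 ht1)
  have hz1S : z1 ∈ d.supp := by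
    rw [ConnectedComponent.mem_supp_iff, ← (ConnectedComponent.mem_supp_iff _ _).mp hs1]
    exact ConnectedComponent.sound hz1.reachable.symm
  obtain ⟨a', b', ha'A, hb'B, ha'S, hb'S⟩ :
      ∃ a' b', a' ∈ A ∧ b' ∈ B ∧ a' ∈ d.supp ∧ b' ∈ d.supp := by
    rcases hbip s1 z1 hz1 with ⟨h1, h2⟩ | ⟨h1, h2⟩
    · exact ⟨s1, z1, h1, h2, hs1, hz1S⟩
    · exact ⟨z1, s1, h2, h1, hz1S, hs1⟩
  have hab' : a' ≠ b' := fun h => Set.disjoint_left.mp hdisj ha'A (h ▸ hb'B)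
  have hua' : u ≠ a' := fun h => huNS (h ▸ ha'S)
  have hub' : u ≠ b' := fun h => huNS (h ▸ hb'S)
  have hva' : v ≠ a' := fun h => hvNS (h ▸ ha'S)
  have hvb' : v ≠ b' := fun h => hvNS (h ▸ hb'S)
  have hnAdj_ub' : ¬ G.Adj u b' := fun h => hvb' (hnbu b' h).symm
  have hnAdj_a'v : ¬ G.Adj a' v := fun h => hua' (hnbv a' h.symm).symm
  have hnAdj_va' : ¬ G.Adj v a' := fun h => hnAdj_a'v h.symm
  set L : Set (Sym2 V) := {s(u,b'), s(v,a')} with hL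
  set G' : SimpleGraph V := G ⊔ fromEdgeSet L with hG'def
  have hle : G ≤ G' := le_sup_left
  have hLne : s(u,b') ≠ s(v,a') := by
    intro hc
    rw [Sym2.eq_iff] at hc
    rcases hc with ⟨h, -⟩ | ⟨h, -⟩
    · exact hne h
    · exact hua' h
  have hG'adj : ∀ x y, G'.Adj x y ↔ G.Adj x y ∨ s(x,y) = s(u,b') ∨ s(x,y) = s(v,a') := by
    intro x y
    rw [hG'def, sup_adj, fromEdgeSet_adj]
    simp only [hL, Set.mem_insert_iff, Set.mem_singleton_iff]
    constructor
    · rintro (h | ⟨h, -⟩)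
      · exact Or.inl h
      · exact Or.inr h
    · rintro (h | h | h)
      · exact Or.inl h
      · refine Or.inr ⟨Or.inl h, ?_⟩
        rw [Sym2.eq_iff] at h
        rcases h with ⟨rfl, rfl⟩ | ⟨rfl, rfl⟩
        · exact hub'
        · exact hub'.symm
      · refine Or.inr ⟨Or.inr h, ?_⟩
        rw [Sym2.eq_iff] at h
        rcases h with ⟨rfl, rfl⟩ | ⟨rfl, rfl⟩
        · exact hva'
        · exact hva'.symm
  have hAdj_ub' : G'.Adj u b' := (hG'adj u b').mpr (Or.inr (Or.inl rfl))
  have hAdj_va' : G'.Adj v a' := (hG'adj v a').mpr (Or.inr (Or.inr rfl))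
  have hAdj_uv : G'.Adj u v := hle huv
  set M : Set V := d.supp ∪ {u, v} with hM
  have hmem : ∀ z, z ∈ M ↔ z ∈ d.supp ∨ z = u ∨ z = v := by
    intro z
    rw [hM, Set.mem_union, Set.mem_insert_iff, Set.mem_singleton_iff]
  have hMclosed : ∀ p q, G'.Adj p q → p ∈ M → q ∈ M := by
    intro p q hpq hp
    rw [hmem] at hp ⊢
    rcases (hG'adj p q).mp hpq with h | h | h
    · rcases hp with hpS | rfl | rfl
      · left
        rw [ConnectedComponent.mem_supp_iff, ← (ConnectedComponent.mem_supp_iff _ _).mp hpS]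
        exact ConnectedComponent.sound h.reachable.symm
      · right; right; exact hnbu q h
      · right; left; exact hnbv q h
    · rw [Sym2.eq_iff] at h
      rcases h with ⟨rfl, rfl⟩ | ⟨rfl, rfl⟩
      · left; exact hb'S
      · right; left; rfl
    · rw [Sym2.eq_iff] at h
      rcases h with ⟨rfl, rfl⟩ | ⟨rfl, rfl⟩
      · left; exact ha'S
      · right; right; rfl
  have keyM : ∀ x y : V, G'.Reachable x y → x ∈ M → y ∈ M := by
    intro x y hr
    obtain ⟨w⟩ := hr
    induction w with
    | nil => exact id
    | @cons a b c h p ih => exact fun hp => ih (hMclosed a b h hp)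
  have keyOut : ∀ x y : V, G'.Reachable x y → x ∉ M → G.Reachable x y := by
    intro x y hr
    obtain ⟨w⟩ := hr
    induction w with
    | nil => exact fun _ => Reachable.refl _
    | @cons a b c h p ih =>
        intro hp
        rcases (hG'adj a b).mp h with hG | hE | hE
        · refine hG.reachable.trans (ih ?_)
          intro hq; exact hp (hMclosed b a h.symm hq)
        · rw [Sym2.eq_iff] at hE
          rcases hE with ⟨rfl, rfl⟩ | ⟨rfl, rfl⟩
          · exact absurd ((hmem _).mpr (Or.inr (Or.inl rfl))) hp
          · exact absurd ((hmem _).mpr (Or.inl hb'S)) hp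
        · rw [Sym2.eq_iff] at hE
          rcases hE with ⟨rfl, rfl⟩ | ⟨rfl, rfl⟩
          · exact absurd ((hmem _).mpr (Or.inr (Or.inr rfl))) hp
          · exact absurd ((hmem _).mpr (Or.inl ha'S)) hp
  have connM : ∀ (H : SimpleGraph V), (∀ s ∈ d.supp, ∀ t ∈ d.supp, H.Reachable s t) →
      H.Reachable u b' → H.Reachable v a' →
      ∀ x ∈ M, ∀ y ∈ M, H.Reachable x y := by
    intro H hSr hru hrv x hx y hy
    have to_a : ∀ z ∈ M, H.Reachable z a' := by
      intro z hz
      rcases (hmem z).mp hz with hzS | rfl | rfl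
      · exact hSr z hzS a' ha'S
      · exact hru.trans (hSr b' hb'S a' ha'S)
      · exact hrv
    exact (to_a x hx).trans (to_a y hy).symm
  have biconnM : ∀ x ∈ M, ∀ y ∈ M, BiconnPair G' x y := by
    intro x hx y hy
    refine ⟨?_, ?_, ?_⟩
    · exact connM G' (fun s hs t ht => (hSreach s hs t ht).mono hle)
        hAdj_ub'.reachable hAdj_va'.reachable x hx y hy
    · intro e he
      by_cases heG : e ∈ G.edgeSet
      · refine connM _ (fun s hs t ht => ((hdbc s hs t ht).2.1 e heG).mono ?_) ?_ ?_ x hx y hy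
        · intro p q hpq; rw [deleteEdges_adj] at hpq ⊢; exact ⟨hle hpq.1, hpq.2⟩
        · refine Adj.reachable ?_
          rw [deleteEdges_adj]
          refine ⟨hAdj_ub', ?_⟩
          simp only [Set.mem_singleton_iff]
          intro hc; rw [← hc] at heG; exact hnAdj_ub' (G.mem_edgeSet.mp heG)
        · refine Adj.reachable ?_
          rw [deleteEdges_adj]
          refine ⟨hAdj_va', ?_⟩
          simp only [Set.mem_singleton_iff]
          intro hc; rw [← hc] at heG; exact hnAdj_va' (G.mem_edgeSet.mp heG)
      · have hGle : G ≤ G'.deleteEdges {e} := by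
          intro p q hpq
          rw [deleteEdges_adj]
          refine ⟨hle hpq, ?_⟩
          simp only [Set.mem_singleton_iff]
          intro hc; exact heG (hc ▸ G.mem_edgeSet.mpr hpq)
        refine connM _ (fun s hs t ht => (hSreach s hs t ht).mono hGle) ?_ ?_ x hx y hy
        · by_cases hce : e = s(u,b')
          · have h1 : (G'.deleteEdges {e}).Adj u v := by
              rw [deleteEdges_adj]
              refine ⟨hAdj_uv, ?_⟩
              simp only [Set.mem_singleton_iff, hce, Sym2.eq_iff]
              rintro (⟨-, h⟩ | ⟨h, -⟩)
              · exact hvb' h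
              · exact hub' h
            have h2 : (G'.deleteEdges {e}).Adj v a' := by
              rw [deleteEdges_adj]
              refine ⟨hAdj_va', ?_⟩
              simp only [Set.mem_singleton_iff, hce]
              exact hLne.symm
            exact h1.reachable.trans (h2.reachable.trans
              ((hSreach a' ha'S b' hb'S).mono hGle))
          · refine Adj.reachable ?_
            rw [deleteEdges_adj]
            refine ⟨hAdj_ub', ?_⟩
            simp only [Set.mem_singleton_iff]
            exact fun hc => hce hc.symm
        · by_cases hce : e = s(v,a')
          · have h1 : (G'.deleteEdges {e}).Adj v u := by
              rw [deleteEdges_adj]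
              refine ⟨hAdj_uv.symm, ?_⟩
              simp only [Set.mem_singleton_iff, hce, Sym2.eq_iff]
              rintro (⟨-, h⟩ | ⟨h, -⟩)
              · exact hua' h
              · exact hva' h
            have h2 : (G'.deleteEdges {e}).Adj u b' := by
              rw [deleteEdges_adj]
              refine ⟨hAdj_ub', ?_⟩
              simp only [Set.mem_singleton_iff, hce]
              exact hLne
            exact h1.reachable.trans (h2.reachable.trans
              ((hSreach b' hb'S a' ha'S).mono hGle))
          · refine Adj.reachable ?_
            rw [deleteEdges_adj]
            refine ⟨hAdj_va', ?_⟩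
            simp only [Set.mem_singleton_iff]
            exact fun hc => hce hc.symm
    · intro w hxw hyw
      have indS : ∀ s t (hs : s ∈ d.supp) (ht : t ∈ d.supp) (hsw : s ≠ w) (htw : t ≠ w),
          (G'.induce {z | z ≠ w}).Reachable ⟨s, hsw⟩ ⟨t, htw⟩ := by
        intro s t hs ht hsw htw
        exact ((hdbc s hs t ht).2.2 w hsw htw).mono (fun p q hpq => hle hpq)
      have indAdj : ∀ p q (hp : p ≠ w) (hq : q ≠ w), G'.Adj p q →
          (G'.induce {z | z ≠ w}).Reachable ⟨p, hp⟩ ⟨q, hq⟩ := by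
        intro p q hp hq h
        exact Adj.reachable h
      by_cases hwa : w = a'
      · subst hwa
        have hT : ∀ z (hz : z ∈ M) (hzw : z ≠ w),
            (G'.induce {z | z ≠ w}).Reachable ⟨z, hzw⟩ ⟨b', hab'.symm⟩ := by
          intro z hz hzw
          rcases (hmem z).mp hz with hzS | rfl | rfl
          · exact indS z b' hzS hb'S hzw hab'.symm
          · exact indAdj z b' hzw hab'.symm hAdj_ub'
          · exact (indAdj z u hzw hua' hAdj_uv.symm).trans
              (indAdj u b' hua' hab'.symm hAdj_ub')
        exact (hT x hx hxw).trans (hT y hy hyw).symm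
      · have ha'w : a' ≠ w := fun h => hwa h.symm
        have hT : ∀ z (hz : z ∈ M) (hzw : z ≠ w),
            (G'.induce {z | z ≠ w}).Reachable ⟨z, hzw⟩ ⟨a', ha'w⟩ := by
          intro z hz hzw
          rcases (hmem z).mp hz with hzS | rfl | rfl
          · exact indS z a' hzS ha'S hzw ha'w
          · by_cases hwb : w = b'
            · subst hwb
              exact (indAdj z v hzw hvb' hAdj_uv).trans
                (indAdj v a' hvb' ha'w hAdj_va')
            · have hb'w : b' ≠ w := fun h => hwb h.symm
              exact (indAdj z b' hzw hb'w hAdj_ub').trans (indS b' a' hb'S ha'S hb'w ha'w)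
          · exact indAdj z a' hzw ha'w hAdj_va'
        exact (hT x hx hxw).trans (hT y hy hyw).symm
  have hcw : ComponentwiseBiconnected G' := by
    intro c'
    apply isBlock_supp
    intro x hx y hy
    have hr : G'.Reachable x y := by
      rw [ConnectedComponent.mem_supp_iff] at hx hy
      exact ConnectedComponent.eq.mp (hx.trans hy.symm)
    by_cases hxM : x ∈ M
    · exact biconnM x hxM y (keyM x y hr hxM)
    · have hGr : G.Reachable x y := keyOut x y hr hxM
      have hxd2 : x ∈ (G.connectedComponentMk x).supp := (ConnectedComponent.mem_supp_iff _ _).mpr rfl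
      have hyd2 : y ∈ (G.connectedComponentMk x).supp := by
        rw [ConnectedComponent.mem_supp_iff]
        exact (ConnectedComponent.sound hGr).symm
      have hblk : IsBlock G (G.connectedComponentMk x).supp := by
        by_contra hnb
        by_cases hiso : IsIsolatedEdgeComp G (G.connectedComponentMk x)
        · have hsub : Subsingleton {c : G.ConnectedComponent // IsIsolatedEdgeComp G c} :=
            (Nat.card_eq_one_iff_unique.mp hC2).1
          have heq : (⟨G.connectedComponentMk x, hiso⟩ :
              {c : G.ConnectedComponent // IsIsolatedEdgeComp G c}) = ⟨c0, hc0iso⟩ :=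
            Subsingleton.elim _ _
          have hd2c0 : G.connectedComponentMk x = c0 := congrArg Subtype.val heq
          have hxc0 : x ∈ c0.supp := by rw [← hd2c0]; exact hxd2
          rw [hsupp] at hxc0
          simp only [Set.mem_insert_iff, Set.mem_singleton_iff] at hxc0
          rcases hxc0 with rfl | rfl
          · exact hxM ((hmem x).mpr (Or.inr (Or.inl rfl)))
          · exact hxM ((hmem x).mpr (Or.inr (Or.inr rfl)))
        · have hemp : IsEmpty {c : G.ConnectedComponent //
              ¬IsIsolatedEdgeComp G c ∧ ¬IsBlock G c.supp} := by
            rcases Nat.card_eq_zero.mp hC1 with h | h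
            · exact h
            · exact absurd h (not_infinite_iff_finite.mpr inferInstance)
          exact hemp.false ⟨G.connectedComponentMk x, hiso, hnb⟩
      exact biconnPair_mono hle (hblk.2.1 x hxd2 y hyd2)
  have hbic : IsBiconnector G A B L := by
    constructor
    · intro e he
      simp only [hL, Set.mem_insert_iff, Set.mem_singleton_iff] at he
      rcases he with rfl | rfl
      · exact ⟨u, b', rfl, huA, hb'B, hnAdj_ub'⟩
      · exact ⟨a', v, Sym2.eq_swap, ha'A, hvB, hnAdj_a'v⟩
    · exact hcw
  have hmem2 : 2 ∈ {k | ∃ L, IsBiconnector G A B L ∧ L.ncard = k} :=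
    ⟨L, hbic, Set.ncard_pair hLne⟩
  have hlow : ∀ k ∈ {k | ∃ L, IsBiconnector G A B L ∧ L.ncard = k}, 2 ≤ k := by
    rintro k ⟨L', hbic', rfl⟩
    by_contra hk
    push_neg at hk
    have hHadj : (G ⊔ fromEdgeSet L').Adj u v := Or.inl huv
    have hsu : u ∈ ((G ⊔ fromEdgeSet L').connectedComponentMk u).supp :=
      (ConnectedComponent.mem_supp_iff _ _).mpr rfl
    have hsv : v ∈ ((G ⊔ fromEdgeSet L').connectedComponentMk u).supp := by
      rw [ConnectedComponent.mem_supp_iff]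
      exact ConnectedComponent.sound hHadj.reachable.symm
    have hbp := (hbic'.2 ((G ⊔ fromEdgeSet L').connectedComponentMk u)).2.1 u hsu v hsv
    have hr := hbp.2.1 s(u,v) ((G ⊔ fromEdgeSet L').mem_edgeSet.mpr hHadj)
    obtain ⟨z1, hz1⟩ := first_step hne hr
    obtain ⟨z2, hz2⟩ := first_step (Ne.symm hne) hr.symm
    rw [deleteEdges_adj] at hz1 hz2
    obtain ⟨hz1a, hz1e⟩ := hz1
    obtain ⟨hz2a, hz2e⟩ := hz2
    simp only [Set.mem_singleton_iff] at hz1e hz2e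
    rw [sup_adj, fromEdgeSet_adj] at hz1a hz2a
    have hz1L : s(u,z1) ∈ L' := by
      rcases hz1a with h | h
      · exact absurd (by rw [hnbu z1 h]) hz1e
      · exact h.1
    have hz2L : s(v,z2) ∈ L' := by
      rcases hz2a with h | h
      · exact absurd (by rw [hnbv z2 h, Sym2.eq_swap]) hz2e
      · exact h.1
    have hz1v : z1 ≠ v := fun h => hz1e (by rw [h])
    have hdiff : s(u,z1) ≠ s(v,z2) := by
      intro hc
      rw [Sym2.eq_iff] at hc
      rcases hc with ⟨h, -⟩ | ⟨-, h⟩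
      · exact hne h
      · exact hz1v h
    have h2le : 1 < L'.ncard :=
      (Set.one_lt_ncard_iff L'.toFinite).mpr ⟨_, _, hz1L, hz2L, hdiff⟩
    omega
  unfold Bnum
  exact le_antisymm (Nat.sInf_le hmem2) (le_csInf ⟨2, hmem2⟩ hlow)

end
end AugBic
end

section
/- Let G=(A,B,E) be a connected bipartite graph with |Λ(G)| > 3. Then G has at most two critical vertices, and if it has exactly two critical vertices then R(Λ(G)) = 0. -/
open SimpleGraph

namespace AugBic

noncomputable section

variable {V : Type*}

/-! ### Infrastructure -/

section Infra
set_option linter.unusedSectionVars false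
set_option linter.unusedVariables false
variable [Fintype V] {G : SimpleGraph V}

/-- Reachability avoiding a vertex. -/
def RA (G : SimpleGraph V) (w x y : V) : Prop := ∃ p : G.Walk x y, w ∉ p.support

/-- Reachability avoiding an edge. -/
def RAE (G : SimpleGraph V) (e : Sym2 V) (x y : V) : Prop := ∃ p : G.Walk x y, e ∉ p.edges

lemma RA.refl' {w x : V} (h : x ≠ w) : RA G w x x :=
  ⟨SimpleGraph.Walk.nil, by simp [Ne.symm h]⟩

lemma RA.symm' {w x y : V} (h : RA G w x y) : RA G w y x := by
  obtain ⟨p, hp⟩ := h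
  exact ⟨p.reverse, by simpa using hp⟩

lemma RA.trans' {w x y z : V} (h1 : RA G w x y) (h2 : RA G w y z) : RA G w x z := by
  obtain ⟨p, hp⟩ := h1; obtain ⟨q, hq⟩ := h2
  refine ⟨p.append q, ?_⟩
  rw [SimpleGraph.Walk.support_append]
  intro hm
  rcases List.mem_append.mp hm with h | h
  · exact hp h
  · exact hq (List.mem_of_mem_tail h)

lemma RAE.refl' {e : Sym2 V} {x : V} : RAE G e x x := ⟨SimpleGraph.Walk.nil, by simp⟩

lemma RAE.symm' {e : Sym2 V} {x y : V} (h : RAE G e x y) : RAE G e y x := by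
  obtain ⟨p, hp⟩ := h
  exact ⟨p.reverse, by simpa using hp⟩

lemma RAE.trans' {e : Sym2 V} {x y z : V} (h1 : RAE G e x y) (h2 : RAE G e y z) : RAE G e x z := by
  obtain ⟨p, hp⟩ := h1; obtain ⟨q, hq⟩ := h2
  refine ⟨p.append q, ?_⟩
  rw [SimpleGraph.Walk.edges_append]
  intro hm
  rcases List.mem_append.mp hm with h | h
  · exact hp h
  · exact hq h

lemma RA.toRAE {w x y c : V} {e : Sym2 V} (hc : c ∈ e) (h : RA G w x y) (hcw : c = w) : RAE G e x y := by
  obtain ⟨p, hp⟩ := h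
  refine ⟨p, fun he => hp ?_⟩
  subst hcw
  induction e with
  | h a b =>
    rcases Sym2.mem_iff.mp hc with rfl | rfl
    · exact p.fst_mem_support_of_mem_edges he
    · exact p.snd_mem_support_of_mem_edges he

lemma walk_of_induce {s : Set V} : ∀ {a b : s} (_ : (G.induce s).Walk a b),
    ∃ p : G.Walk a.1 b.1, ∀ z ∈ p.support, z ∈ s := by
  intro a b W
  induction W with
  | @nil u => exact ⟨SimpleGraph.Walk.nil, by rintro z hz; simp at hz; subst hz; exact u.2⟩
  | @cons c d f h W ih =>
    obtain ⟨p, hp⟩ := ih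
    refine ⟨SimpleGraph.Walk.cons h p, ?_⟩
    intro z hz
    change z ∈ (c.1 :: p.support) at hz
    rcases List.mem_cons.mp hz with rfl | hz
    · exact c.2
    · exact hp z hz

lemma induce_walk_of {s : Set V} : ∀ {x y : V} (p : G.Walk x y) (hs : ∀ z ∈ p.support, z ∈ s),
    (G.induce s).Reachable ⟨x, hs x p.start_mem_support⟩ ⟨y, hs y p.end_mem_support⟩ := by
  intro x y p
  induction p with
  | nil => intro hs; exact SimpleGraph.Reachable.refl _
  | @cons a b c h p ih =>
    intro hs
    have hb : b ∈ s := hs b (by simp [SimpleGraph.Walk.support_cons])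
    have ha : a ∈ s := hs a (by simp [SimpleGraph.Walk.support_cons])
    have hadj : (G.induce s).Adj ⟨a, ha⟩ ⟨b, hb⟩ := h
    refine hadj.reachable.trans ?_
    have := ih (fun z hz => hs z (by rw [SimpleGraph.Walk.support_cons]; exact List.mem_cons_of_mem _ hz))
    exact this

lemma RA_iff {w x y : V} (hx : x ≠ w) (hy : y ≠ w) :
    RA G w x y ↔ (G.induce {z | z ≠ w}).Reachable ⟨x, hx⟩ ⟨y, hy⟩ := by
  constructor
  · rintro ⟨p, hp⟩
    have hs : ∀ z ∈ p.support, z ∈ {z : V | z ≠ w} := fun z hz => by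
      intro hzw; exact hp (hzw ▸ hz)
    exact induce_walk_of p hs
  · rintro ⟨W⟩
    obtain ⟨p, hp⟩ := walk_of_induce W
    exact ⟨p, fun hw => (hp w hw) rfl⟩

lemma RAE_iff {e : Sym2 V} {x y : V} :
    (G.deleteEdges {e}).Reachable x y ↔ RAE G e x y := by
  constructor
  · rintro ⟨W⟩
    have hsub : ∀ e' ∈ W.edges, e' ∈ G.edgeSet := fun e' he' => by
      have := W.edges_subset_edgeSet he'
      rw [SimpleGraph.edgeSet_deleteEdges] at this
      exact this.1
    refine ⟨W.transfer G hsub, ?_⟩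
    rw [SimpleGraph.Walk.edges_transfer]
    intro he
    have := W.edges_subset_edgeSet he
    rw [SimpleGraph.edgeSet_deleteEdges] at this
    exact this.2 rfl
  · rintro ⟨p, hp⟩
    exact ⟨p.toDeleteEdges {e} (by rintro e' he' he''; rw [Set.mem_singleton_iff] at he''; exact hp (he'' ▸ he'))⟩

lemma mk_eq_mk_iff_RA {u x y : V} (hx : x ≠ u) (hy : y ≠ u) :
    ((G.induce {z | z ≠ u}).connectedComponentMk ⟨x, hx⟩ =
      (G.induce {z | z ≠ u}).connectedComponentMk ⟨y, hy⟩) ↔ RA G u x y := by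
  rw [SimpleGraph.ConnectedComponent.eq]
  exact ((RA_iff hx hy)).symm

lemma card_cc_of_connected (h : G.Connected) : Nat.card G.ConnectedComponent = 1 := by
  rw [Nat.card_eq_one_iff_unique]
  constructor
  · constructor
    intro a b
    induction a using SimpleGraph.ConnectedComponent.ind with
    | _ x =>
    induction b using SimpleGraph.ConnectedComponent.ind with
    | _ y => exact SimpleGraph.ConnectedComponent.sound (h.preconnected x y)
  · have : Nonempty V := h.nonempty
    exact ⟨G.connectedComponentMk (Classical.arbitrary V)⟩

lemma isCutVertex_of_sep (hconn : G.Connected) {w x y : V} (hx : x ≠ w) (hy : y ≠ w)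
    (h : ¬ RA G w x y) : IsCutVertex G w := by
  unfold IsCutVertex
  rw [card_cc_of_connected hconn]
  have hne : (G.induce {z | z ≠ w}).connectedComponentMk ⟨x, hx⟩ ≠
      (G.induce {z | z ≠ w}).connectedComponentMk ⟨y, hy⟩ :=
    fun he => h ((mk_eq_mk_iff_RA hx hy).mp he)
  exact Finite.one_lt_card (h := ⟨_, _, hne⟩)

lemma sep_of_isCutVertex (hconn : G.Connected) {w : V} (h : IsCutVertex G w) :
    ∃ x y, x ≠ w ∧ y ≠ w ∧ ¬ RA G w x y := by
  unfold IsCutVertex at h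
  rw [card_cc_of_connected hconn] at h
  have hnt : Nontrivial ((G.induce {z | z ≠ w}).ConnectedComponent) :=
    Finite.one_lt_card_iff_nontrivial.mp h
  obtain ⟨a, b, hab⟩ := hnt
  obtain ⟨⟨x, hx⟩, ha⟩ := a.exists_rep
  obtain ⟨⟨y, hy⟩, hb⟩ := b.exists_rep
  refine ⟨x, y, hx, hy, fun hra => hab ?_⟩
  rw [← ha, ← hb]
  exact (mk_eq_mk_iff_RA hx hy).mpr hra

lemma not_end_mem_takeUntil [DecidableEq V] {x y v : V} {p : G.Walk x y} (hp : p.IsPath)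
    (hv : v ∈ p.support) (hvy : v ≠ y) : y ∉ (p.takeUntil v hv).support := by
  intro hyt
  have hnd : p.support.Nodup := hp.support_nodup
  rw [← p.take_spec hv, SimpleGraph.Walk.support_append, List.nodup_append] at hnd
  have hyd : y ∈ (p.dropUntil v hv).support.tail := by
    have h1 := (p.dropUntil v hv).end_mem_support
    rw [SimpleGraph.Walk.support_eq_cons] at h1
    rcases List.mem_cons.mp h1 with h1 | h1
    · exact absurd h1.symm hvy
    · exact h1
  exact hnd.2.2 y hyt y hyd rfl

lemma not_start_mem_dropUntil [DecidableEq V] {x y v : V} {p : G.Walk x y} (hp : p.IsPath)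
    (hv : v ∈ p.support) (hvx : v ≠ x) : x ∉ (p.dropUntil v hv).support := by
  intro hxd
  have hnd : p.support.Nodup := hp.support_nodup
  rw [← p.take_spec hv, SimpleGraph.Walk.support_append, List.nodup_append] at hnd
  have hx1 : x ∈ (p.takeUntil v hv).support := SimpleGraph.Walk.start_mem_support _
  have hxt : x ∈ (p.dropUntil v hv).support.tail := by
    rw [SimpleGraph.Walk.support_eq_cons] at hxd
    rcases List.mem_cons.mp hxd with h1 | h1
    · exact absurd h1.symm hvx
    · exact h1
  exact hnd.2.2 x hx1 x hxt rfl

lemma cross (hconn : G.Connected) {u v z : V} (hzu : z ≠ u) (hzv : z ≠ v) (huv : u ≠ v)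
    (h1 : ¬ RA G u z v) (h2 : ¬ RA G v z u) : False := by
  classical
  obtain ⟨W⟩ := hconn.preconnected z u
  have hpath : (W.toPath : G.Walk z u).IsPath := W.toPath.2
  set p : G.Walk z u := (W.toPath : G.Walk z u) with hpdef
  have hv : v ∈ p.support := by
    by_contra hvv
    exact h2 ⟨p, hvv⟩
  have hu : u ∉ (p.takeUntil v hv).support :=
    not_end_mem_takeUntil hpath hv huv.symm
  exact h1 ⟨p.takeUntil v hv, hu⟩

end Infra
section EX
set_option linter.unusedSectionVars false
set_option linter.unusedVariables false
set_option maxHeartbeats 1000000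
variable [Fintype V] {G : SimpleGraph V}

lemma exists_pendant_in_branch (hconn : G.Connected) {u x0 : V} (hucut : IsCutVertex G u)
    (hx0 : x0 ≠ u) :
    ∃ (S : Set V) (x : V), IsPendantBlock G S ∧ x ∈ S ∧ ¬ IsCutVertex G x ∧ x ≠ u ∧
      RA G u x x0 := by
  classical
  set Valid : V × Set V → Prop := fun pr =>
    (∃ a, a ∈ pr.2 ∧ pr.2 = {y | y ≠ pr.1 ∧ RA G pr.1 y a}) ∧ u ∉ pr.2 ∧
      (∀ y ∈ pr.2, RA G u y x0) with hValid
  have hV0 : Valid (u, {y | y ≠ u ∧ RA G u y x0}) := by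
    refine ⟨⟨x0, ⟨hx0, RA.refl' hx0⟩, rfl⟩, by simp, fun y hy => hy.2⟩
  set NS : Set ℕ := {n | ∃ pr, Valid pr ∧ pr.2.ncard = n} with hNS'
  have hNS : NS.Nonempty := ⟨_, ⟨_, hV0, rfl⟩⟩
  obtain ⟨⟨w, K⟩, hval, hKcard⟩ := Nat.sInf_mem hNS
  obtain ⟨⟨a, haK, hKdef⟩, huK, hInv⟩ := hval
  dsimp only at hKcard haK hKdef huK hInv
  have hmin : ∀ (z : V) (X : Set V), Valid (z, X) → K.ncard ≤ X.ncard := by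
    intro z X hv
    rw [hKcard]
    exact Nat.sInf_le ⟨(z, X), hv, rfl⟩
  have hKmem : ∀ {y : V}, y ∈ K ↔ (y ≠ w ∧ RA G w y a) := by
    intro y; rw [hKdef]; rfl
  have haw : a ≠ w := (hKmem.mp haK).1
  have hau : a ≠ u := fun h => huK (h ▸ haK)
  -- every vertex of K is joined to u avoiding any z in the "outside" direction:
  have RAzuw : ∀ z ∈ K, u ≠ w → RA G z u w := by
    intro z hz huw
    obtain ⟨hzw, hza⟩ := hKmem.mp hz
    by_contra hcon
    obtain ⟨W⟩ := hconn.preconnected u w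
    have hpath : (W.toPath : G.Walk u w).IsPath := W.toPath.2
    set p : G.Walk u w := (W.toPath : G.Walk u w) with hpdef
    have hzp : z ∈ p.support := by
      by_contra h; exact hcon ⟨p, h⟩
    have hw : w ∉ (p.takeUntil z hzp).support := not_end_mem_takeUntil hpath hzp hzw
    have h1 : RA G w u z := ⟨p.takeUntil z hzp, hw⟩
    exact huK (hKmem.mpr ⟨huw, h1.trans' hza⟩)
  have LEMX : ∀ z ∈ K, ∀ x' : V, x' ≠ z → ¬ RA G z x' u → False := by
    intro z hzK x' hx'z hsep
    obtain ⟨hzw, hza⟩ := hKmem.mp hzK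
    have hzu : z ≠ u := fun h => huK (h ▸ hzK)
    have hx'u : x' ≠ u := by rintro rfl; exact hsep (RA.refl' hzu.symm)
    set X : Set V := {y | y ≠ z ∧ RA G z y x'} with hXdef
    have huX : u ∉ X := fun h => hsep h.2.symm'
    have hwX : w ∉ X := by
      intro h
      by_cases huw : u = w
      · exact huX (huw ▸ h)
      · exact hsep (((RAzuw z hzK huw).trans' h.2).symm')
    have hXK : ∀ y ∈ X, y ∈ K := by
      intro y hy
      obtain ⟨hyz, hyx'⟩ := hy
      have hyu : ¬ RA G z y u := fun h => hsep (hyx'.symm'.trans' h)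
      have hyw : y ≠ w := fun h => hwX (h ▸ (⟨hyz, hyx'⟩ : y ≠ z ∧ RA G z y x'))
      have step1 : ¬ RA G w y u := by
        by_cases huw : u = w
        · subst huw; rintro ⟨q, hq⟩; exact hq q.end_mem_support
        · rintro ⟨q, hq⟩
          have hzq : z ∈ q.support := by
            by_contra h; exact hyu ⟨q, h⟩
          have h1 : RA G w z u :=
            ⟨q.dropUntil z hzq, fun h => hq (SimpleGraph.Walk.support_dropUntil_subset _ _ h)⟩
          exact huK (hKmem.mpr ⟨huw, h1.symm'.trans' hza⟩)
      obtain ⟨W2⟩ := hconn.preconnected y u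
      have hpath : (W2.toPath : G.Walk y u).IsPath := W2.toPath.2
      set p : G.Walk y u := (W2.toPath : G.Walk y u) with hpdef
      have hzp : z ∈ p.support := by
        by_contra h; exact hyu ⟨p, h⟩
      have hwp : w ∈ p.support := by
        by_contra h; exact step1 ⟨p, h⟩
      by_cases hzt : z ∈ (p.takeUntil w hwp).support
      · have hq2 : w ∉ ((p.takeUntil w hwp).takeUntil z hzt).support :=
          not_end_mem_takeUntil (hpath.takeUntil hwp) hzt hzw
        have hRAwyz : RA G w y z := ⟨_, hq2⟩
        exact hKmem.mpr ⟨hyw, hRAwyz.trans' hza⟩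
      · exfalso
        have hzd : z ∈ (p.dropUntil w hwp).support := by
          have hzp' := hzp
          rw [← p.take_spec hwp, SimpleGraph.Walk.support_append] at hzp'
          rcases List.mem_append.mp hzp' with h | h
          · exact absurd h hzt
          · exact List.mem_of_mem_tail h
        have hw2 : w ∉ ((p.dropUntil w hwp).dropUntil z hzd).support :=
          not_start_mem_dropUntil (hpath.dropUntil hwp) hzd hzw
        by_cases huw : u = w
        · have hend := SimpleGraph.Walk.end_mem_support ((p.dropUntil w hwp).dropUntil z hzd)
          exact hw2 (Eq.subst
            (motive := fun x => x ∈ ((p.dropUntil w hwp).dropUntil z hzd).support) huw hend)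
        · have h1 : RA G w z u := ⟨_, hw2⟩
          exact huK (hKmem.mpr ⟨huw, h1.symm'.trans' hza⟩)
    have hx'X : x' ∈ X := ⟨hx'z, RA.refl' hx'z⟩
    have hvalX : Valid (z, X) := ⟨⟨x', hx'X, rfl⟩, huX, fun y hy => hInv y (hXK y hy)⟩
    have hle : K.ncard ≤ X.ncard := hmin z X hvalX
    have hlt : X.ncard < K.ncard := by
      have hsub : X ⊆ K \ {z} := fun y hy => ⟨hXK y hy, by simp [hy.1]⟩
      calc X.ncard ≤ (K \ {z}).ncard := Set.ncard_le_ncard hsub (Set.toFinite _)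
        _ < K.ncard := Set.ncard_diff_singleton_lt_of_mem hzK (Set.toFinite _)
    omega
  have NOKCUT : ∀ z ∈ K, ¬ IsCutVertex G z := by
    intro z hzK hcut
    obtain ⟨x, y, hxz, hyz, hxy⟩ := sep_of_isCutVertex hconn hcut
    by_cases hx : RA G z x u
    · by_cases hy : RA G z y u
      · exact hxy (hx.trans' hy.symm')
      · exact LEMX z hzK y hyz hy
    · exact LEMX z hzK x hxz hx
  have walkK : ∀ k, k ∈ K → ∃ q : G.Walk k a, ∀ t ∈ q.support, t ∈ K := by
    intro k hk
    obtain ⟨hkw, q, hq⟩ := hKmem.mp hk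
    refine ⟨q, fun t ht => hKmem.mpr ⟨fun h => hq (h ▸ ht),
      ⟨q.dropUntil t ht, fun h => hq (SimpleGraph.Walk.support_dropUntil_subset _ _ h)⟩⟩⟩
  have PATHIN : ∃ q : G.Walk w a, ∀ t ∈ q.support, t ∈ insert w K := by
    obtain ⟨W⟩ := hconn.preconnected w a
    have hpath : (W.toPath : G.Walk w a).IsPath := W.toPath.2
    refine ⟨(W.toPath : G.Walk w a), fun t ht => ?_⟩
    by_cases htw : t = w
    · exact htw ▸ Set.mem_insert _ _
    · exact Set.mem_insert_of_mem _ (hKmem.mpr ⟨htw,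
        ⟨(W.toPath : G.Walk w a).dropUntil t ht, not_start_mem_dropUntil hpath ht htw⟩⟩)
  have walkS : ∀ p, p ∈ insert w K → ∃ q : G.Walk p a, ∀ t ∈ q.support, t ∈ insert w K := by
    intro p hp
    rcases Set.mem_insert_iff.mp hp with rfl | hpK
    · exact PATHIN
    · obtain ⟨q, hq⟩ := walkK p hpK
      exact ⟨q, fun t ht => Set.mem_insert_of_mem _ (hq t ht)⟩
  have CONN_S : ∀ p q : V, p ∈ insert w K → q ∈ insert w K → ∀ z, z ∉ insert w K →
      RA G z p q := by
    intro p q hp hq z hz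
    obtain ⟨qp, hqp⟩ := walkS p hp
    obtain ⟨qq, hqq⟩ := walkS q hq
    refine ⟨qp.append qq.reverse, ?_⟩
    rw [SimpleGraph.Walk.support_append]
    intro hm
    rcases List.mem_append.mp hm with h | h
    · exact hz (hqp z h)
    · refine hz (hqq z ?_)
      have := List.mem_of_mem_tail h
      rwa [SimpleGraph.Walk.support_reverse, List.mem_reverse] at this
  have RAuS : ∀ p, p ∈ insert w K → p ≠ u → RA G u p a := by
    intro p hp hpu
    rcases Set.mem_insert_iff.mp hp with rfl | hpK
    · obtain ⟨q, hq⟩ := PATHIN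
      refine ⟨q, fun h => ?_⟩
      rcases Set.mem_insert_iff.mp (hq u h) with h' | h'
      · exact hpu h'.symm
      · exact huK h'
    · exact (hInv p hpK).trans' (hInv a haK).symm'
  have VCASE : ∀ z p q : V, p ∈ insert w K → q ∈ insert w K → z ≠ p → z ≠ q →
      ¬ RA G z p q → False := by
    intro z p q hp hq hzp hzq hsep
    have hzS : z ∈ insert w K := by
      by_contra h
      exact hsep (CONN_S p q hp hq z h)
    by_cases hzu : z = u
    · subst hzu
      by_cases hpu : p = z
      · exact hzp hpu.symm
      · by_cases hqu : q = z
        · exact hzq hqu.symm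
        · exact hsep ((RAuS p hp hpu).trans' (RAuS q hq hqu).symm')
    · have hzw : z ≠ w := by
        rintro rfl
        have hpK : p ∈ K := by
          rcases Set.mem_insert_iff.mp hp with h | h
          · exact absurd h.symm hzp
          · exact h
        have hqK : q ∈ K := by
          rcases Set.mem_insert_iff.mp hq with h | h
          · exact absurd h.symm hzq
          · exact h
        obtain ⟨qp, hqp⟩ := walkK p hpK
        obtain ⟨qq, hqq⟩ := walkK q hqK
        refine hsep ⟨qp.append qq.reverse, ?_⟩
        rw [SimpleGraph.Walk.support_append]
        intro hm
        rcases List.mem_append.mp hm with h | h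
        · exact (hKmem.mp (hqp _ h)).1 rfl
        · refine (hKmem.mp (hqq _ ?_)).1 rfl
          have := List.mem_of_mem_tail h
          rwa [SimpleGraph.Walk.support_reverse, List.mem_reverse] at this
      have hzK : z ∈ K := by
        rcases Set.mem_insert_iff.mp hzS with h | h
        · exact absurd h hzw
        · exact h
      by_cases hpu' : RA G z p u
      · by_cases hqu' : RA G z q u
        · exact hsep (hpu'.trans' hqu'.symm')
        · exact LEMX z hzK q (fun h => hzq h.symm) hqu'
      · exact LEMX z hzK p (fun h => hzp h.symm) hpu'
  -- main dichotomy
  by_cases hBC : BiconnSet G (insert w K)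
  · -- the whole branch together with w is a pendant block
    have haS : a ∈ insert w K := Set.mem_insert_of_mem _ haK
    have hwS : w ∈ insert w K := Set.mem_insert _ _
    have hwcut : IsCutVertex G w := by
      by_cases huw : u = w
      · exact huw ▸ hucut
      · refine isCutVertex_of_sep hconn haw huw ?_
        intro h
        exact huK (hKmem.mpr ⟨huw, h.symm'⟩)
    have hblock : IsBlock G (insert w K) := by
      refine ⟨⟨w, hwS⟩, hBC, ?_⟩
      intro T hsub hbT
      refine Set.Subset.antisymm ?_ hsub
      intro t htT
      by_contra htS
      have htw : t ≠ w := fun h => htS (h ▸ hwS)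
      have htK : t ∉ K := fun h => htS (Set.mem_insert_of_mem _ h)
      have hnra : ¬ RA G w t a := fun h => htK (hKmem.mpr ⟨htw, h⟩)
      have hbp := hbT a (hsub haS) t htT
      have hir := hbp.2.2 w haw htw
      exact hnra ((RA_iff haw htw).mpr hir).symm'
    have hpend : IsPendantBlock G (insert w K) := by
      refine ⟨hblock, Or.inr ⟨?_, ⟨w, ⟨hwS, hwcut⟩, ?_⟩⟩⟩
      · rw [Set.one_lt_ncard_iff (Set.toFinite _)]
        exact ⟨a, w, haS, hwS, haw⟩
      · rintro z ⟨hz1, hz2⟩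
        rcases Set.mem_insert_iff.mp hz1 with h | h
        · exact h
        · exact absurd hz2 (NOKCUT z h)
    exact ⟨insert w K, a, hpend, haS, NOKCUT a haK, hau, hInv a haK⟩
  · -- a biconnectivity failure inside insert w K
    rw [BiconnSet] at hBC
    push_neg at hBC
    obtain ⟨p, hpS, q, hqS, hnbp⟩ := hBC
    have hreach : G.Reachable p q := hconn.preconnected p q
    by_cases h2 : ∀ e ∈ G.edgeSet, (G.deleteEdges {e}).Reachable p q
    · -- vertex failure
      have h3 : ¬ ∀ (w' : V) (hu' : p ≠ w') (hv' : q ≠ w'),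
          (G.induce {x | x ≠ w'}).Reachable ⟨p, hu'⟩ ⟨q, hv'⟩ := by
        intro h3; exact hnbp ⟨hreach, h2, h3⟩
      push_neg at h3
      obtain ⟨z, hpz, hqz, hnr⟩ := h3
      exact (VCASE z p q hpS hqS (Ne.symm hpz) (Ne.symm hqz)
        (fun h => hnr ((RA_iff hpz hqz).mp h))).elim
    · -- edge failure
      push_neg at h2
      obtain ⟨e, heE, hnreach⟩ := h2
      have hnrae : ¬ RAE G e p q := fun h => hnreach (RAE_iff.mpr h)
      have MAIN : ∀ t s : V, G.Adj t s → t ∈ insert w K → s ∈ insert w K →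
          ¬ RAE G s(t, s) t u →
          ∃ S x, IsPendantBlock G S ∧ x ∈ S ∧ ¬ IsCutVertex G x ∧ x ≠ u ∧ RA G u x x0 := by
        intro t s hadj htS hsS hnt
        have hts : t ≠ s := hadj.ne
        have htu : t ≠ u := by rintro rfl; exact hnt RAE.refl'
        by_cases hsK : s ∈ K
        · have hsep : ¬ RA G s t u := by
            rintro ⟨W, hW⟩
            exact hnt ⟨W, fun he => hW (W.snd_mem_support_of_mem_edges he)⟩
          exact (LEMX s hsK t hts hsep).elim
        · have hsw : s = w := by
            rcases Set.mem_insert_iff.mp hsS with h | h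
            · exact h
            · exact absurd h hsK
          subst hsw
          have htK : t ∈ K := by
            rcases Set.mem_insert_iff.mp htS with h | h
            · exact absurd h hts
            · exact h
          by_cases hY : ∃ y, y ≠ t ∧ RAE G s(t, s) y t
          · obtain ⟨y, hyt, hyRAE⟩ := hY
            have hsep : ¬ RA G t y u := by
              rintro ⟨W, hW⟩
              refine hnt (hyRAE.symm'.trans' ⟨W, fun he => hW (W.fst_mem_support_of_mem_edges he)⟩)
            exact (LEMX t htK y hyt hsep).elim
          · push_neg at hY
            have hnbr : G.neighborSet t = {s} := by
              ext n
              simp only [SimpleGraph.mem_neighborSet, Set.mem_singleton_iff]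
              constructor
              · intro hn
                by_contra hnw
                have hrae : RAE G s(t, s) n t := by
                  refine ⟨SimpleGraph.Walk.cons hn.symm SimpleGraph.Walk.nil, ?_⟩
                  rw [SimpleGraph.Walk.edges_cons, SimpleGraph.Walk.edges_nil]
                  intro hm
                  rcases List.mem_singleton.mp hm with hm'
                  rcases Sym2.eq_iff.mp hm' with ⟨h1, h2⟩ | ⟨h1, h2⟩
                  · exact hn.ne h1
                  · exact hnw h2.symm
                exact hY n hn.ne' hrae
              · rintro rfl; exact hadj
            have hblk : IsBlock G {t} := by
              refine ⟨⟨t, rfl⟩, ?_, ?_⟩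
              · rintro x hx y hy
                rw [Set.mem_singleton_iff] at hx hy
                subst hx; subst hy
                exact ⟨SimpleGraph.Reachable.refl _, fun e' he' => SimpleGraph.Reachable.refl _,
                  fun w' h1' h2' => SimpleGraph.Reachable.refl _⟩
              · intro T hsub hbT
                refine Set.Subset.antisymm ?_ hsub
                intro t' ht'
                rw [Set.mem_singleton_iff]
                by_contra htt'
                have hbp := hbT t (hsub rfl) t' ht'
                have hdel := hbp.2.1 s(t, s) (by rw [SimpleGraph.mem_edgeSet]; exact hadj)
                have hR : RAE G s(t, s) t' t := (RAE_iff.mp hdel).symm'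
                exact hY t' (fun h => htt' h) hR
            refine ⟨{t}, t, ⟨hblk, Or.inl ⟨t, rfl, by rw [hnbr]; exact Set.ncard_singleton s⟩⟩,
              rfl, NOKCUT t htK, fun h => huK (h ▸ htK), hInv t htK⟩
      -- align the edge with p, q
      obtain ⟨c, d, rfl⟩ : ∃ c d : V, e = s(c, d) := ⟨e.out.1, e.out.2, (Quot.out_eq e).symm⟩
      have hadj : G.Adj c d := heE
      have hcd : c ≠ d := hadj.ne
      by_cases hcpq : c ≠ p ∧ c ≠ q
      · refine (VCASE c p q hpS hqS hcpq.1 hcpq.2 ?_).elim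
        rintro ⟨W, hW⟩
        exact hnrae ⟨W, fun he => hW (W.fst_mem_support_of_mem_edges he)⟩
      · by_cases hdpq : d ≠ p ∧ d ≠ q
        · refine (VCASE d p q hpS hqS hdpq.1 hdpq.2 ?_).elim
          rintro ⟨W, hW⟩
          exact hnrae ⟨W, fun he => hW (W.snd_mem_support_of_mem_edges he)⟩
        · push_neg at hcpq hdpq
          have EDGE : ∀ c' d' : V, G.Adj c' d' → c' ∈ insert w K → d' ∈ insert w K →
              ¬ RAE G s(c', d') c' d' →
              ∃ S x, IsPendantBlock G S ∧ x ∈ S ∧ ¬ IsCutVertex G x ∧ x ≠ u ∧ RA G u x x0 := by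
            intro c' d' hadj' hc'S hd'S hnr'
            by_cases hcu : RAE G s(c', d') c' u
            · have hdu : ¬ RAE G s(c', d') d' u := fun h => hnr' (hcu.trans' h.symm')
              have hdu' : ¬ RAE G s(d', c') d' u := by rw [Sym2.eq_swap]; exact hdu
              exact MAIN d' c' hadj'.symm hd'S hc'S hdu'
            · exact MAIN c' d' hadj' hc'S hd'S hcu
          rcases em (c = p) with rfl | hcp
          · have hdq : d = q := hdpq (fun h => hcd h.symm)
            subst hdq
            exact EDGE c d hadj hpS hqS hnrae
          · have hcq : c = q := hcpq hcp
            subst hcq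
            have hdp : d = p := by
              by_cases h : d = p
              · exact h
              · exact absurd (hdpq h) (Ne.symm hcd)
            subst hdp
            exact EDGE c d hadj hqS hpS (fun h => hnrae h.symm')
end EX
section Count
set_option linter.unusedSectionVars false
set_option linter.unusedVariables false
set_option maxHeartbeats 1000000
variable [Fintype V] {G : SimpleGraph V}

lemma card_ne_comp {α : Type*} [Finite α] (c0 : α) :
    Nat.card {c : α // c ≠ c0} = Nat.card α - 1 := by
  classical
  cases nonempty_fintype α
  simp only [Nat.card_eq_fintype_card]
  have h1 : Fintype.card {c : α // ¬ (c = c0)} =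
      Fintype.card α - Fintype.card {c : α // c = c0} := Fintype.card_subtype_compl _
  rw [Fintype.card_subtype_eq] at h1
  have he : Fintype.card {c : α // c ≠ c0} = Fintype.card {c : α // ¬ (c = c0)} :=
    Fintype.card_congr (Equiv.subtypeEquivRight (fun c => by tauto))
  omega

lemma card_ne2_comp {α : Type*} [Finite α] (c0 c1 : α) :
    Nat.card α - 2 ≤ Nat.card {c : α // c ≠ c0 ∧ c ≠ c1} := by
  classical
  cases nonempty_fintype α
  simp only [Nat.card_eq_fintype_card]
  have h2 : Fintype.card {c : α // c = c0 ∨ c = c1} ≤ 2 := by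
    have hinj : Function.Injective
        (fun c : {c : α // c = c0 ∨ c = c1} => (if c.1 = c0 then (0 : Fin 2) else 1)) := by
      rintro ⟨c, hc⟩ ⟨c', hc'⟩ h
      simp only at h
      by_cases h0 : c = c0 <;> by_cases h0' : c' = c0
      · exact Subtype.ext (h0.trans h0'.symm)
      · rw [if_pos h0, if_neg h0'] at h; exact absurd h (by decide)
      · rw [if_neg h0, if_pos h0'] at h; exact absurd h (by decide)
      · exact Subtype.ext ((hc.resolve_left h0).trans (hc'.resolve_left h0').symm)
    simpa using Fintype.card_le_of_injective _ hinj
  have h1 : Fintype.card {c : α // ¬ (c = c0 ∨ c = c1)} =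
      Fintype.card α - Fintype.card {c : α // c = c0 ∨ c = c1} := Fintype.card_subtype_compl _
  have he : Fintype.card {c : α // c ≠ c0 ∧ c ≠ c1} =
      Fintype.card {c : α // ¬ (c = c0 ∨ c = c1)} :=
    Fintype.card_congr (Equiv.subtypeEquivRight (fun c => by tauto))
  omega

lemma dnum_eq (hconn : G.Connected) (a : V) :
    Dnum G a = Nat.card ((G.induce {z | z ≠ a}).ConnectedComponent) := by
  unfold Dnum
  have hset : {v | G.Reachable a v ∧ v ≠ a} = {z | z ≠ a} :=
    Set.ext fun v => ⟨fun h => h.2, fun h => ⟨hconn.preconnected a v, h⟩⟩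
  rw [hset]

lemma notRA_of_ne_mk {v x t : V} (hx : x ≠ v) (ht : t ≠ v)
    {c : (G.induce {z | z ≠ v}).ConnectedComponent}
    (hmk : (G.induce {z | z ≠ v}).connectedComponentMk ⟨x, hx⟩ = c)
    (hne : c ≠ (G.induce {z | z ≠ v}).connectedComponentMk ⟨t, ht⟩) : ¬ RA G v x t :=
  fun h => hne (by rw [← hmk]; exact (mk_eq_mk_iff_RA hx ht).mpr h)

lemma injS {S : Set V} (hblk : IsBlock G S) {a x y : V} (hx : x ∈ S) (hy : y ∈ S)
    (hxa : x ≠ a) (hya : y ≠ a) (hsep : ¬ RA G a x y) : False := by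
  by_cases hxy : x = y
  · exact hsep (hxy ▸ RA.refl' hxa)
  · have hbp := hblk.2.1 x hx y hy
    exact hsep ((RA_iff hxa hya).mpr (hbp.2.2 a hxa hya))

lemma injX (hconn : G.Connected) {S : Set V} (hblk : IsBlock G S) {a b x y : V} (hab : a ≠ b)
    (hxS : x ∈ S) (hyS : y ∈ S) (hxa : x ≠ a) (hyb : y ≠ b)
    (hxb : ¬ RA G a x b) (hya : ¬ RA G b y a) : False := by
  have hxb' : x ≠ b := by rintro rfl; exact hxb (RA.refl' (Ne.symm hab))
  have hya' : y ≠ a := by rintro rfl; exact hya (RA.refl' hab)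
  by_cases hxy : x = y
  · subst hxy
    exact cross hconn hxa hxb' hab hxb hya
  · by_cases hra : RA G a x y
    · have h1 : ¬ RA G a y b := fun h => hxb (hra.trans' h)
      exact cross hconn hya' hyb hab h1 hya
    · exact injS hblk hxS hyS hxa hya' hra

lemma pick_pendant (hconn : G.Connected) {v : V} (hcv : IsCutVertex G v)
    (c : (G.induce {z | z ≠ v}).ConnectedComponent) :
    ∃ (S : Set V) (x : V) (hx : x ≠ v), IsPendantBlock G S ∧ x ∈ S ∧ ¬ IsCutVertex G x ∧
      (G.induce {z | z ≠ v}).connectedComponentMk ⟨x, hx⟩ = c := by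
  obtain ⟨⟨x0, hx0⟩, hrep⟩ := c.exists_rep
  obtain ⟨S, x, hS, hxS, hnc, hxa, hra⟩ := exists_pendant_in_branch hconn hcv hx0
  exact ⟨S, x, hxa, hS, hxS, hnc, by rw [← hrep]; exact (mk_eq_mk_iff_RA hxa hx0).mpr hra⟩

lemma count2 (hconn : G.Connected) {a b : V} (hab : a ≠ b)
    (hca : IsCutVertex G a) (hcb : IsCutVertex G b) :
    (Dnum G a - 1) + (Dnum G b - 1) ≤ (pendantBlocks G).ncard := by
  classical
  choose SA xA hxA hSA hxSA hncA hmkA using fun d => pick_pendant hconn hca d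
  choose SB xB hxB hSB hxSB hncB hmkB using fun d => pick_pendant hconn hcb d
  let cb : (G.induce {z | z ≠ a}).ConnectedComponent :=
    (G.induce {z | z ≠ a}).connectedComponentMk ⟨b, Ne.symm hab⟩
  let ca : (G.induce {z | z ≠ b}).ConnectedComponent :=
    (G.induce {z | z ≠ b}).connectedComponentMk ⟨a, hab⟩
  let F : {d // d ≠ cb} ⊕ {d // d ≠ ca} → ↥(pendantBlocks G) :=
    Sum.elim (fun d => ⟨SA d.1, (hSA d.1 : IsPendantBlock G _)⟩)
      (fun d => ⟨SB d.1, (hSB d.1 : IsPendantBlock G _)⟩)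
  have hFinj : Function.Injective F := by
    rintro (⟨d, hd⟩ | ⟨d, hd⟩) (⟨d', hd'⟩ | ⟨d', hd'⟩) h <;>
      simp only [F, Sum.elim_inl, Sum.elim_inr, Subtype.mk.injEq] at h
    · have hcc : d = d' := by
        by_contra hne
        have hsep : ¬ RA G a (xA d) (xA d') :=
          notRA_of_ne_mk (hxA d) (hxA d') (hmkA d) (by rw [hmkA d']; exact hne)
        exact (injS (hSA d).1 (hxSA d) (Subtype.mk.inj h ▸ hxSA d') (hxA d) (hxA d') hsep).elim
      subst hcc; rfl
    · exact (injX hconn (hSA d).1 hab (hxSA d) (Subtype.mk.inj h ▸ hxSB d') (hxA d) (hxB d')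
        (notRA_of_ne_mk (hxA d) (Ne.symm hab) (hmkA d) hd)
        (notRA_of_ne_mk (hxB d') hab (hmkB d') hd')).elim
    · exact (injX hconn (hSB d).1 (Ne.symm hab) (hxSB d) (Subtype.mk.inj h ▸ hxSA d') (hxB d) (hxA d')
        (notRA_of_ne_mk (hxB d) hab (hmkB d) hd)
        (notRA_of_ne_mk (hxA d') (Ne.symm hab) (hmkA d') hd')).elim
    · have hcc : d = d' := by
        by_contra hne
        have hsep : ¬ RA G b (xB d) (xB d') :=
          notRA_of_ne_mk (hxB d) (hxB d') (hmkB d) (by rw [hmkB d']; exact hne)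
        exact (injS (hSB d).1 (hxSB d) (Subtype.mk.inj h ▸ hxSB d') (hxB d) (hxB d') hsep).elim
      subst hcc; rfl
  have hle := Nat.card_le_card_of_injective F hFinj
  rw [Nat.card_sum, Nat.card_coe_set_eq, card_ne_comp, card_ne_comp] at hle
  rw [dnum_eq hconn a, dnum_eq hconn b]
  exact hle

lemma count3 (hconn : G.Connected) {a b c : V} (hab : a ≠ b) (hac : a ≠ c) (hbc : b ≠ c)
    (hca : IsCutVertex G a) (hcb : IsCutVertex G b) (hcc : IsCutVertex G c)
    (h1 : RA G b a c) (h2 : RA G c a b) :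
    (Dnum G a - 2) + (Dnum G b - 1) + (Dnum G c - 1) ≤ (pendantBlocks G).ncard := by
  classical
  choose SA xA hxA hSA hxSA hncA hmkA using fun d => pick_pendant hconn hca d
  choose SB xB hxB hSB hxSB hncB hmkB using fun d => pick_pendant hconn hcb d
  choose SC xC hxC hSC hxSC hncC hmkC using fun d => pick_pendant hconn hcc d
  let cab : (G.induce {z | z ≠ a}).ConnectedComponent :=
    (G.induce {z | z ≠ a}).connectedComponentMk ⟨b, Ne.symm hab⟩
  let cac : (G.induce {z | z ≠ a}).ConnectedComponent :=
    (G.induce {z | z ≠ a}).connectedComponentMk ⟨c, Ne.symm hac⟩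
  let cba : (G.induce {z | z ≠ b}).ConnectedComponent :=
    (G.induce {z | z ≠ b}).connectedComponentMk ⟨a, hab⟩
  let cbc : (G.induce {z | z ≠ b}).ConnectedComponent :=
    (G.induce {z | z ≠ b}).connectedComponentMk ⟨c, Ne.symm hbc⟩
  let cca : (G.induce {z | z ≠ c}).ConnectedComponent :=
    (G.induce {z | z ≠ c}).connectedComponentMk ⟨a, hac⟩
  let ccb : (G.induce {z | z ≠ c}).ConnectedComponent :=
    (G.induce {z | z ≠ c}).connectedComponentMk ⟨b, hbc⟩
  have hbc' : ∀ d, d ≠ cba → d ≠ cbc := by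
    intro d hd he
    exact hd (he.trans ((mk_eq_mk_iff_RA (Ne.symm hbc) hab).mpr h1.symm'))
  have hcb' : ∀ d, d ≠ cca → d ≠ ccb := by
    intro d hd he
    exact hd (he.trans ((mk_eq_mk_iff_RA hbc hac).mpr h2.symm'))
  let F : {d // d ≠ cab ∧ d ≠ cac} ⊕ ({d // d ≠ cba} ⊕ {d // d ≠ cca}) →
      ↥(pendantBlocks G) :=
    Sum.elim (fun d => ⟨SA d.1, (hSA d.1 : IsPendantBlock G _)⟩)
      (Sum.elim (fun d => ⟨SB d.1, (hSB d.1 : IsPendantBlock G _)⟩)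
        (fun d => ⟨SC d.1, (hSC d.1 : IsPendantBlock G _)⟩))
  have hFinj : Function.Injective F := by
    rintro (⟨d, hd⟩ | ⟨d, hd⟩ | ⟨d, hd⟩) (⟨d', hd'⟩ | ⟨d', hd'⟩ | ⟨d', hd'⟩) h <;>
      simp only [F, Sum.elim_inl, Sum.elim_inr, Subtype.mk.injEq] at h
    · have hcc2 : d = d' := by
        by_contra hne
        exact (injS (hSA d).1 (hxSA d) (Subtype.mk.inj h ▸ hxSA d') (hxA d) (hxA d')
          (notRA_of_ne_mk (hxA d) (hxA d') (hmkA d) (by rw [hmkA d']; exact hne))).elim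
      subst hcc2; rfl
    · exact (injX hconn (hSA d).1 hab (hxSA d) (Subtype.mk.inj h ▸ hxSB d') (hxA d) (hxB d')
        (notRA_of_ne_mk (hxA d) (Ne.symm hab) (hmkA d) hd.1)
        (notRA_of_ne_mk (hxB d') hab (hmkB d') hd')).elim
    · exact (injX hconn (hSA d).1 hac (hxSA d) (Subtype.mk.inj h ▸ hxSC d') (hxA d) (hxC d')
        (notRA_of_ne_mk (hxA d) (Ne.symm hac) (hmkA d) hd.2)
        (notRA_of_ne_mk (hxC d') hac (hmkC d') hd')).elim
    · exact (injX hconn (hSB d).1 (Ne.symm hab) (hxSB d) (Subtype.mk.inj h ▸ hxSA d') (hxB d) (hxA d')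
        (notRA_of_ne_mk (hxB d) hab (hmkB d) hd)
        (notRA_of_ne_mk (hxA d') (Ne.symm hab) (hmkA d') hd'.1)).elim
    · have hcc2 : d = d' := by
        by_contra hne
        exact (injS (hSB d).1 (hxSB d) (Subtype.mk.inj h ▸ hxSB d') (hxB d) (hxB d')
          (notRA_of_ne_mk (hxB d) (hxB d') (hmkB d) (by rw [hmkB d']; exact hne))).elim
      subst hcc2; rfl
    · exact (injX hconn (hSB d).1 hbc (hxSB d) (Subtype.mk.inj h ▸ hxSC d') (hxB d) (hxC d')
        (notRA_of_ne_mk (hxB d) (Ne.symm hbc) (hmkB d) (hbc' d hd))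
        (notRA_of_ne_mk (hxC d') hbc (hmkC d') (hcb' d' hd'))).elim
    · exact (injX hconn (hSC d).1 (Ne.symm hac) (hxSC d) (Subtype.mk.inj h ▸ hxSA d') (hxC d) (hxA d')
        (notRA_of_ne_mk (hxC d) hac (hmkC d) hd)
        (notRA_of_ne_mk (hxA d') (Ne.symm hac) (hmkA d') hd'.2)).elim
    · exact (injX hconn (hSC d).1 (Ne.symm hbc) (hxSC d) (Subtype.mk.inj h ▸ hxSB d') (hxC d) (hxB d')
        (notRA_of_ne_mk (hxC d) hbc (hmkC d) (hcb' d hd))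
        (notRA_of_ne_mk (hxB d') (Ne.symm hbc) (hmkB d') (hbc' d' hd'))).elim
    · have hcc2 : d = d' := by
        by_contra hne
        exact (injS (hSC d).1 (hxSC d) (Subtype.mk.inj h ▸ hxSC d') (hxC d) (hxC d')
          (notRA_of_ne_mk (hxC d) (hxC d') (hmkC d) (by rw [hmkC d']; exact hne))).elim
      subst hcc2; rfl
  have hle := Nat.card_le_card_of_injective F hFinj
  rw [Nat.card_sum, Nat.card_sum, Nat.card_coe_set_eq, card_ne_comp, card_ne_comp] at hle
  have hA := card_ne2_comp cab cac
  rw [dnum_eq hconn a, dnum_eq hconn b, dnum_eq hconn c]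
  omega

end Count
section Final
set_option linter.unusedSectionVars false
set_option linter.unusedVariables false
set_option maxHeartbeats 1000000
variable [Fintype V] {G : SimpleGraph V}

lemma matching_bound (A B : Set V) {N : Set (Set V × Set V)} {Λ' : Set (Set V)}
    (hN : IsLegalMatching G A B Λ' N) : 2 * N.ncard ≤ Λ'.ncard := by
  classical
  let f : ↥N × Bool → ↥Λ' := fun qi =>
    if h : qi.2 then ⟨qi.1.1.1, (hN.1 _ qi.1.2).1⟩ else ⟨qi.1.1.2, (hN.1 _ qi.1.2).2.1⟩
  have hinj : Function.Injective f := by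
    rintro ⟨⟨q, hq⟩, i⟩ ⟨⟨q', hq'⟩, j⟩ h
    have hdisj : q ≠ q' → ({q.1, q.2} ∩ {q'.1, q'.2} : Set (Set V)) = ∅ :=
      fun hne => hN.2 _ hq _ hq' hne
    have hmem : ∀ (hne : q ≠ q') (s : Set V), s ∈ ({q.1, q.2} : Set (Set V)) →
        s ∈ ({q'.1, q'.2} : Set (Set V)) → False := by
      intro hne s h1 h2
      have : s ∈ ({q.1, q.2} ∩ {q'.1, q'.2} : Set (Set V)) := ⟨h1, h2⟩
      rw [hdisj hne] at this
      exact this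
    have hne1 : q.1 ≠ q.2 := (hN.1 _ hq).2.2.2.2.1
    have hne1' : q'.1 ≠ q'.2 := (hN.1 _ hq').2.2.2.2.1
    cases i <;> cases j <;> simp only [f, dif_pos, dif_neg, Bool.false_eq_true,
        not_false_iff, Subtype.mk.injEq, if_true, if_false] at h
    · -- both false : q.2 = q'.2
      by_cases hqq : q = q'
      · subst hqq; rfl
      · exact (hmem hqq q.2 (Set.mem_insert_of_mem _ rfl)
          (by rw [h]; exact Set.mem_insert_of_mem _ rfl)).elim
    · -- false, true : q.2 = q'.1
      by_cases hqq : q = q'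
      · subst hqq; exact absurd h.symm hne1
      · exact (hmem hqq q.2 (Set.mem_insert_of_mem _ rfl)
          (by rw [h]; exact Set.mem_insert _ _)).elim
    · by_cases hqq : q = q'
      · subst hqq; exact absurd h hne1
      · exact (hmem hqq q.1 (Set.mem_insert _ _)
          (by rw [h]; exact Set.mem_insert_of_mem _ rfl)).elim
    · by_cases hqq : q = q'
      · subst hqq; rfl
      · exact (hmem hqq q.1 (Set.mem_insert _ _)
          (by rw [h]; exact Set.mem_insert _ _)).elim
  have hle := Nat.card_le_card_of_injective f hinj
  rw [Nat.card_prod, Nat.card_coe_set_eq, Nat.card_coe_set_eq] at hle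
  have : Nat.card Bool = 2 := by simp [Nat.card_eq_fintype_card]
  rw [this] at hle
  omega

lemma two_mul_maxMatching_le (A B : Set V) (Λ' : Set (Set V)) :
    2 * maxMatching G A B Λ' ≤ Λ'.ncard := by
  classical
  unfold maxMatching
  have hne : {k | ∃ N, IsLegalMatching G A B Λ' N ∧ N.ncard = k}.Nonempty := by
    refine ⟨0, ∅, ⟨?_, ?_⟩, by simp⟩
    · intro q hq; exact absurd hq (Set.notMem_empty q)
    · intro q hq; exact absurd hq (Set.notMem_empty q)
  have hub : ∀ k ∈ {k | ∃ N, IsLegalMatching G A B Λ' N ∧ N.ncard = k}, k ≤ Λ'.ncard / 2 := by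
    rintro k ⟨N, hN, rfl⟩
    have := matching_bound A B hN
    omega
  have := csSup_le hne hub
  omega
end Final

theorem stmt_15 [Fintype V] (G : SimpleGraph V) (A B : Set V)
    (hdisj : Disjoint A B) (hcov : A ∪ B = Set.univ)
    (hbip : ∀ u v : V, G.Adj u v → (u ∈ A ∧ v ∈ B) ∨ (u ∈ B ∧ v ∈ A))
    (hconn : G.Connected) (hcard : 3 < (pendantBlocks G).ncard) :
    {u : V | Critical G A B u}.ncard ≤ 2 ∧
    ({u : V | Critical G A B u}.ncard = 2 → Rnum G A B (pendantBlocks G) = 0) := by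
  classical
  set L : ℕ := (pendantBlocks G).ncard with hL
  set M : ℕ := maxMatching G A B (pendantBlocks G) with hM
  have h2M : 2 * M ≤ L := two_mul_maxMatching_le A B (pendantBlocks G)
  have hR : Rnum G A B (pendantBlocks G) = L - 2 * M := rfl
  have hcritD : ∀ v : V, Critical G A B v → Dnum G v - 1 = L - M ∧ Dnum G v = L - M + 1 := by
    intro v hv
    have h1 := hv.2
    rw [hR] at h1
    constructor
    · omega
    · omega
  have key2 : ∀ u v : V, Critical G A B u → Critical G A B v → u ≠ v → L = 2 * M := by
    intro u v hu hv huv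
    have hc := count2 hconn huv hu.1 hv.1
    have hDu := (hcritD u hu).1
    have hDv := (hcritD v hv).1
    omega
  have key3 : ∀ u v w : V, Critical G A B u → Critical G A B v → Critical G A B w →
      u ≠ v → u ≠ w → v ≠ w → False := by
    intro u v w hu hv hw huv huw hvw
    have hL2M : L = 2 * M := key2 u v hu hv huv
    have hDu := (hcritD u hu).2
    have hDv := (hcritD v hv).2
    have hDw := (hcritD w hw).2
    by_cases s1 : RA G v u w
    · by_cases s2 : RA G w u v
      · have := count3 hconn huv huw hvw hu.1 hv.1 hw.1 s1 s2
        omega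
      · -- w separates u and v : use (a,b,c) = (w,u,v)
        have sA : RA G u w v := by
          by_contra s3
          exact cross hconn (Ne.symm huv) hvw huw
            (fun h => s3 h.symm') (fun h => s2 h.symm')
        have sB : RA G v w u := s1.symm'
        have := count3 hconn (Ne.symm huw) (Ne.symm hvw) huv hw.1 hu.1 hv.1 sA sB
        omega
    · -- v separates u and w : use (a,b,c) = (v,u,w)
      have sA : RA G u v w := by
        by_contra s3
        exact cross hconn (Ne.symm huw) (Ne.symm hvw) huv
          (fun h => s3 h.symm') (fun h => s1 h.symm')
      have sB : RA G w v u := by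
        by_contra s3
        exact cross hconn huv huw hvw s1 (fun h => s3 h.symm')
      have := count3 hconn (Ne.symm huv) hvw huw hv.1 hu.1 hw.1 sA sB
      omega
  have hle2 : {u : V | Critical G A B u}.ncard ≤ 2 := by
    by_contra hgt
    push_neg at hgt
    obtain ⟨t, hts, ht3⟩ := Set.exists_subset_card_eq (show 3 ≤ {u : V | Critical G A B u}.ncard by omega)
    obtain ⟨x, y, z, hxy, hxz, hyz, rfl⟩ := Set.ncard_eq_three.mp ht3
    exact key3 x y z (hts (by simp)) (hts (by simp)) (hts (by simp)) hxy hxz hyz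
  refine ⟨hle2, ?_⟩
  intro h2
  obtain ⟨x, y, hxy, hset⟩ := Set.ncard_eq_two.mp h2
  have hx : Critical G A B x := by
    have : x ∈ {u : V | Critical G A B u} := by rw [hset]; simp
    exact this
  have hy : Critical G A B y := by
    have : y ∈ {u : V | Critical G A B u} := by rw [hset]; simp
    exact this
  have := key2 x y hx hy hxy
  rw [hR]
  omega
end
end AugBic
end

section
/- Let G=(A,B,E) be a connected bipartite graph with |Λ(G)| > 3. Then G has at most one massive vertex, and if it has a massive vertex then it has no critical vertex. -/
open SimpleGraph

namespace AugBic

noncomputable section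

variable {V : Type*}

section Helpers
variable [Fintype V] {G : SimpleGraph V}

/-- Inclusion homomorphism from an induced subgraph. -/
def ivHom (G : SimpleGraph V) (s : Set V) : G.induce s →g G :=
  ⟨Subtype.val, fun {a b} h => h⟩

lemma walk_avoid_of_induce_reachable {w a b : V} (ha : a ≠ w) (hb : b ≠ w)
    (h : (G.induce {x | x ≠ w}).Reachable ⟨a, ha⟩ ⟨b, hb⟩) :
    ∃ p : G.Walk a b, w ∉ p.support := by
  obtain ⟨q⟩ := h
  refine ⟨q.map (ivHom G _), ?_⟩
  show w ∉ (q.map (ivHom G _)).support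
  rw [SimpleGraph.Walk.support_map]
  intro hmem
  obtain ⟨x, _, hxval⟩ := List.mem_map.mp hmem
  exact x.2 hxval

lemma induce_reachable_of_walk_avoid {w : V} :
    ∀ {a b : V} (p : G.Walk a b), (∀ x ∈ p.support, x ≠ w) →
    ∀ (ha : a ≠ w) (hb : b ≠ w), (G.induce {x | x ≠ w}).Reachable ⟨a, ha⟩ ⟨b, hb⟩ := by
  intro a b p
  induction p with
  | nil => intro _ ha hb; exact Reachable.refl _
  | @cons a t b h q ih =>
    intro hp ha hb
    have ht : t ≠ w := hp t (by simp [Walk.support_cons])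
    have h1 : (G.induce {x | x ≠ w}).Adj ⟨a, ha⟩ ⟨t, ht⟩ := h
    exact h1.reachable.trans (ih (fun x hx => hp x (by simp [Walk.support_cons, hx])) ht hb)

lemma biconnPair_self (a : V) : BiconnPair G a a :=
  ⟨Reachable.refl _, fun _ _ => Reachable.refl _, fun _ hu _ => Reachable.refl _⟩

lemma card_cc_of_connected_s16 {W : Type*} {H : SimpleGraph W} (h : H.Connected) :
    Nat.card H.ConnectedComponent = 1 := by
  rw [Nat.card_eq_one_iff_unique]
  refine ⟨⟨fun c d => ?_⟩, ⟨H.connectedComponentMk h.nonempty.some⟩⟩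
  refine ConnectedComponent.ind₂ (fun v w => ?_) c d
  exact ConnectedComponent.sound (h.preconnected v w)

lemma mem_of_walk_closed {C : Set V} {u : V}
    (hclosed : ∀ a ∈ C, ∀ b, b ≠ u → G.Adj a b → b ∈ C) :
    ∀ {a b : V} (p : G.Walk a b), a ∈ C → (∀ x ∈ p.support, x ≠ u) →
      ∀ x ∈ p.support, x ∈ C := by
  intro a b p
  induction p with
  | nil =>
    intro ha _ x hx
    rw [Walk.support_nil, List.mem_singleton] at hx
    exact hx ▸ ha
  | @cons a t b h q ih =>
    intro ha hp x hx
    have ht : t ∈ C := hclosed a ha t (hp t (by simp)) h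
    rw [Walk.support_cons] at hx
    rcases List.mem_cons.mp hx with rfl | hx
    · exact ha
    · exact ih ht (fun y hy => hp y (by simp [hy])) x hx

lemma walk_to_center {C : Set V} :
    ∀ {u b : V} (_ : G.Walk b u), C ⊆ {x | x ≠ u} →
      (∀ a ∈ C, ∀ b, b ≠ u → G.Adj a b → b ∈ C) → b ∈ C →
      ∃ q : G.Walk b u, ∀ x ∈ q.support, x ∈ C ∪ {u} := by
  intro u b p
  induction p with
  | nil => intro hsub _ hb; exact absurd rfl (hsub hb)
  | @cons b t u' h q ih =>
    intro hsub hclosed hb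
    by_cases ht : t = u'
    · subst ht
      refine ⟨Walk.cons h Walk.nil, ?_⟩
      intro x hx
      simp only [Walk.support_cons, Walk.support_nil, List.mem_cons, List.mem_singleton] at hx
      rcases hx with rfl | hx
      · exact Or.inl hb
      · simp at hx; exact Or.inr (by simp [hx])
    · have htC : t ∈ C := hclosed b hb t ht h
      obtain ⟨q', hq'⟩ := ih hsub hclosed htC
      refine ⟨Walk.cons h q', ?_⟩
      intro x hx
      rw [Walk.support_cons] at hx
      rcases List.mem_cons.mp hx with rfl | hx
      · exact Or.inl hb
      · exact hq' x hx

lemma walk_missing {C : Set V} :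
    ∀ {u t : V} (_ : G.Walk t u), C ⊆ {x | x ≠ u} →
      (∀ a ∈ C, ∀ b, b ≠ u → G.Adj a b → b ∈ C) → t ∉ C →
      ∃ q : G.Walk t u, ∀ x ∈ q.support, x ∉ C := by
  intro u t p
  induction p with
  | nil =>
    intro hsub _ _
    refine ⟨Walk.nil, ?_⟩
    intro x hx
    rw [Walk.support_nil, List.mem_singleton] at hx
    subst hx
    exact fun hC => hsub hC rfl
  | @cons t s u' h q ih =>
    intro hsub hclosed htC
    by_cases hs : s ∈ C
    · by_cases htu : t = u'
      · subst htu
        refine ⟨Walk.nil, ?_⟩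
        intro x hx
        rw [Walk.support_nil, List.mem_singleton] at hx
        subst hx
        exact htC
      · exact absurd (hclosed s hs t htu h.symm) htC
    · obtain ⟨q', hq'⟩ := ih hsub hclosed hs
      refine ⟨Walk.cons h q', ?_⟩
      intro x hx
      rw [Walk.support_cons] at hx
      rcases List.mem_cons.mp hx with rfl | hx
      · exact htC
      · exact hq' x hx

lemma isCutVertex_of_walkless (hconn : G.Connected) {w a b : V} (ha : a ≠ w) (hb : b ≠ w)
    (h : ¬ ∃ p : G.Walk a b, w ∉ p.support) : IsCutVertex G w := by
  have h1 : Nat.card G.ConnectedComponent = 1 := card_cc_of_connected_s16 hconn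
  rw [IsCutVertex, h1]
  refine Finite.one_lt_card_iff_nontrivial.mpr
    ⟨(G.induce {x | x ≠ w}).connectedComponentMk ⟨a, ha⟩,
     (G.induce {x | x ≠ w}).connectedComponentMk ⟨b, hb⟩, ?_⟩
  intro hEq
  exact h (walk_avoid_of_induce_reachable ha hb (ConnectedComponent.exact hEq))

lemma not_isCutVertex (hconn : G.Connected) {y : V}
    (h : (G.induce {x | x ≠ y}).Connected) : ¬ IsCutVertex G y := by
  rw [IsCutVertex, card_cc_of_connected_s16 hconn, card_cc_of_connected_s16 h]
  exact lt_irrefl 1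

lemma induce_connected_of_hub {y u : V} (hu : u ≠ y)
    (h : ∀ t : V, t ≠ y → ∃ p : G.Walk t u, ∀ x ∈ p.support, x ≠ y) :
    (G.induce {x | x ≠ y}).Connected := by
  have : Nonempty ↥{x | x ≠ y} := ⟨⟨u, hu⟩⟩
  refine ⟨?_⟩
  rintro ⟨t, ht⟩ ⟨s, hs⟩
  obtain ⟨p, hp⟩ := h t ht
  obtain ⟨q, hq⟩ := h s hs
  exact (induce_reachable_of_walk_avoid p hp ht hu).trans
    (induce_reachable_of_walk_avoid q hq hs hu).symm

end Helpers


section Main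
variable [Fintype V] {G : SimpleGraph V}

lemma pendant_of_biconn (hconn : G.Connected) {u : V} {C : Set V}
    (hsub : C ⊆ {x | x ≠ u}) (hne : C.Nonempty)
    (hclosed : ∀ a ∈ C, ∀ b, b ≠ u → G.Adj a b → b ∈ C)
    (hout : ∃ z, z ∉ C ∧ z ≠ u)
    (hbc : BiconnSet G (C ∪ {u})) :
    IsPendantBlock G (C ∪ {u}) := by
  obtain ⟨x0, hx0⟩ := hne
  have hx0u : x0 ≠ u := hsub hx0
  obtain ⟨z, hzC, hzu⟩ := hout
  have hmax : ∀ T, C ∪ {u} ⊆ T → BiconnSet G T → T = C ∪ {u} := by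
    intro T hsubT hbT
    apply Set.Subset.antisymm ?_ hsubT
    intro t htT
    by_cases htu : t = u
    · exact Or.inr (by simp [htu])
    · have hpair := hbT x0 (hsubT (Or.inl hx0)) t htT
      obtain ⟨p, hp⟩ := walk_avoid_of_induce_reachable hx0u htu (hpair.2.2 u hx0u htu)
      have hsupp : ∀ x ∈ p.support, x ≠ u := fun x hx hxu => hp (hxu ▸ hx)
      exact Or.inl (mem_of_walk_closed hclosed p hx0 hsupp t p.end_mem_support)
  have hcut : IsCutVertex G u := by
    apply isCutVertex_of_walkless hconn hx0u hzu
    rintro ⟨p, hp⟩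
    have hsupp : ∀ x ∈ p.support, x ≠ u := fun x hx hxu => hp (hxu ▸ hx)
    exact hzC (mem_of_walk_closed hclosed p hx0 hsupp z p.end_mem_support)
  have hnotcut : ∀ y ∈ C, ¬ IsCutVertex G y := by
    intro y hy
    have hyu : y ≠ u := hsub hy
    have huy : u ≠ y := Ne.symm hyu
    apply not_isCutVertex hconn
    apply induce_connected_of_hub huy
    intro t hty
    by_cases htu : t = u
    · subst htu
      exact ⟨Walk.nil, by
        intro x hx
        rw [Walk.support_nil, List.mem_singleton] at hx
        exact hx ▸ huy⟩
    · by_cases htC : t ∈ C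
      · have hpair := hbc t (Or.inl htC) u (Or.inr rfl)
        obtain ⟨p, hp⟩ := walk_avoid_of_induce_reachable hty huy (hpair.2.2 y hty huy)
        exact ⟨p, fun x hx hxy => hp (hxy ▸ hx)⟩
      · obtain ⟨p0⟩ := hconn.preconnected t u
        obtain ⟨q, hq⟩ := walk_missing p0 hsub hclosed htC
        exact ⟨q, fun x hx hxy => hq x hx (hxy ▸ hy)⟩
  refine ⟨⟨⟨x0, Or.inl hx0⟩, hbc, hmax⟩, Or.inr ⟨?_, ⟨u, ⟨Or.inr rfl, hcut⟩, ?_⟩⟩⟩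
  · rw [Set.one_lt_ncard_iff (Set.toFinite _)]
    exact ⟨x0, u, Or.inl hx0, Or.inr rfl, hx0u⟩
  · rintro y ⟨hymem, hycut⟩
    rcases hymem with hyC | hyu
    · exact absurd hycut (hnotcut y hyC)
    · exact hyu

lemma bridge_half (hconn : G.Connected) {u : V} {C : Set V}
    (hsub : C ⊆ {x | x ≠ u})
    (hclosed : ∀ a ∈ C, ∀ b, b ≠ u → G.Adj a b → b ∈ C)
    {x y : V} (hadj : G.Adj x y) (hyCU : y ∈ C ∪ {u})
    (hsep : ¬ (G.deleteEdges {s(x,y)}).Reachable x y)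
    (hux : (G.deleteEdges {s(x,y)}).Reachable u x) :
    (∃ P, IsPendantBlock G P ∧ (P \ {u}).Nonempty ∧ P \ {u} ⊆ C) ∨
    (∃ w ∈ C, ∃ c ∈ C, c ≠ w ∧ ¬ ∃ p : G.Walk c u, w ∉ p.support) := by
  have hyu : y ≠ u := by rintro rfl; exact hsep hux.symm
  have hyC : y ∈ C := by
    rcases hyCU with h | h
    · exact h
    · rw [Set.mem_singleton_iff] at h; exact absurd h hyu
  by_cases hz : ∃ z, G.Adj y z ∧ s(y, z) ≠ s(x, y)
  · obtain ⟨z, hzadj, hzne⟩ := hz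
    have hzy' : (G.deleteEdges {s(x,y)}).Adj y z :=
      deleteEdges_adj.mpr ⟨hzadj, by simpa using hzne⟩
    have hzu : z ≠ u := by rintro rfl; exact hsep (hzy'.reachable.trans hux).symm
    have hzC : z ∈ C := hclosed y hyC z hzu hzadj
    refine Or.inr ⟨y, hyC, z, hzC, hzadj.ne', ?_⟩
    rintro ⟨p, hpy⟩
    have hpe : ∀ e' ∈ p.edges, e' ∉ ({s(x,y)} : Set (Sym2 V)) := by
      intro e' he'
      rw [Set.mem_singleton_iff]
      rintro rfl
      exact hpy (Walk.snd_mem_support_of_mem_edges p he')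
    have hzu' : (G.deleteEdges {s(x,y)}).Reachable z u := ⟨p.toDeleteEdges _ hpe⟩
    exact hsep (hzy'.reachable.trans (hzu'.trans hux)).symm
  · push_neg at hz
    have hnbhd : G.neighborSet y = {x} := by
      ext z
      simp only [mem_neighborSet, Set.mem_singleton_iff]
      constructor
      · intro hA
        rcases Sym2.eq_iff.mp (hz z hA) with ⟨h1, h2⟩ | ⟨h1, h2⟩
        · exact absurd h2 hA.ne'
        · exact h2
      · rintro rfl; exact hadj.symm
    left
    refine ⟨{y}, ⟨⟨⟨y, rfl⟩, ?_, ?_⟩, Or.inl ⟨y, rfl, by rw [hnbhd]; simp⟩⟩,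
      ⟨y, by simp [hyu]⟩, ?_⟩
    · intro a ha b hb
      rw [Set.mem_singleton_iff] at ha hb
      subst ha; subst hb
      exact biconnPair_self _
    · intro T hsubT hbT
      refine Set.eq_singleton_iff_unique_mem.mpr ⟨hsubT rfl, fun t htT => ?_⟩
      have hpair := hbT y (hsubT rfl) t htT
      obtain ⟨p⟩ := hpair.2.1 s(x,y) (G.mem_edgeSet.mpr hadj)
      cases p with
      | nil => rfl
      | cons h q =>
        obtain ⟨hA, hne⟩ := deleteEdges_adj.mp h
        exact absurd (by simp [hz _ hA]) hne
    · rintro t ⟨ht1, _⟩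
      rw [Set.mem_singleton_iff] at ht1
      exact ht1 ▸ hyC

lemma side_aux (x y : V) : ∀ {t z : V} (_ : G.Walk t z), (z = x ∨ z = y) →
    (G.deleteEdges {s(x,y)}).Reachable t x ∨ (G.deleteEdges {s(x,y)}).Reachable t y := by
  intro t z p
  induction p with
  | nil =>
    rintro (rfl | rfl)
    · exact Or.inl (Reachable.refl _)
    · exact Or.inr (Reachable.refl _)
  | @cons t s z h q ih =>
    intro hz
    by_cases hE : s(t, s) = s(x, y)
    · rcases Sym2.eq_iff.mp hE with ⟨rfl, rfl⟩ | ⟨rfl, rfl⟩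
      · exact Or.inl (Reachable.refl _)
      · exact Or.inr (Reachable.refl _)
    · have hA : (G.deleteEdges {s(x,y)}).Adj t s := deleteEdges_adj.mpr ⟨h, by simp [hE]⟩
      rcases ih hz with h1 | h1
      · exact Or.inl (hA.reachable.trans h1)
      · exact Or.inr (hA.reachable.trans h1)

lemma step (hconn : G.Connected) {u : V} {C : Set V}
    (hsub : C ⊆ {x | x ≠ u})
    (hwalk : ∀ a ∈ C, ∀ b ∈ C, ∃ p : G.Walk a b, ∀ x ∈ p.support, x ∈ C)
    (hclosed : ∀ a ∈ C, ∀ b, b ≠ u → G.Adj a b → b ∈ C)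
    (hnb : ¬ BiconnSet G (C ∪ {u})) :
    (∃ P, IsPendantBlock G P ∧ (P \ {u}).Nonempty ∧ P \ {u} ⊆ C) ∨
    (∃ w ∈ C, ∃ c ∈ C, c ≠ w ∧ ¬ ∃ p : G.Walk c u, w ∉ p.support) := by
  rw [BiconnSet] at hnb
  push_neg at hnb
  obtain ⟨a, ha, b, hb, hfail⟩ := hnb
  have hreach : G.Reachable a b := hconn.preconnected a b
  -- a walk from a to b inside C ∪ {u}
  have hab : ∃ p : G.Walk a b, ∀ x ∈ p.support, x ∈ C ∪ {u} := by
    rcases ha with haC | hau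
    · rcases hb with hbC | hbu
      · obtain ⟨p, hp⟩ := hwalk a haC b hbC
        exact ⟨p, fun x hx => Or.inl (hp x hx)⟩
      · obtain ⟨p0⟩ := hconn.preconnected a b
        rw [Set.mem_singleton_iff] at hbu
        subst hbu
        exact walk_to_center p0 hsub hclosed haC
    · rw [Set.mem_singleton_iff] at hau
      subst hau
      rcases hb with hbC | hbu
      · obtain ⟨p0⟩ := hconn.preconnected b a
        obtain ⟨q, hq⟩ := walk_to_center p0 hsub hclosed hbC
        refine ⟨q.reverse, ?_⟩
        intro x hx
        rw [Walk.support_reverse, List.mem_reverse] at hx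
        exact hq x hx
      · rw [Set.mem_singleton_iff] at hbu
        subst hbu
        exact ⟨Walk.nil, by
          intro x hx
          rw [Walk.support_nil, List.mem_singleton] at hx
          exact Or.inr (by simp [hx])⟩
  by_cases hY : ∀ e ∈ G.edgeSet, (G.deleteEdges {e}).Reachable a b
  · -- the vertex-cut case
    have hZ : ¬ ∀ w : V, ∀ hu : a ≠ w, ∀ hv : b ≠ w,
        (G.induce {x | x ≠ w}).Reachable ⟨a, hu⟩ ⟨b, hv⟩ := by
      intro hZ'
      exact hfail ⟨hreach, hY, hZ'⟩
    push_neg at hZ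
    obtain ⟨w, haw, hbw, hnr⟩ := hZ
    have hnwalk : ¬ ∃ p : G.Walk a b, w ∉ p.support := by
      rintro ⟨p, hp⟩
      exact hnr (induce_reachable_of_walk_avoid p (fun x hx h => hp (by rwa [h] at hx)) haw hbw)
    have hwu : w ≠ u := by
      rintro rfl
      have haC : a ∈ C := by
        rcases ha with h' | h'
        · exact h'
        · rw [Set.mem_singleton_iff] at h'; exact absurd h' haw
      have hbC : b ∈ C := by
        rcases hb with h' | h'
        · exact h'
        · rw [Set.mem_singleton_iff] at h'; exact absurd h' hbw
      obtain ⟨p, hp⟩ := hwalk a haC b hbC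
      exact hnwalk ⟨p, fun hmem => (hsub (hp _ hmem)) rfl⟩
    have hwC : w ∈ C := by
      by_contra hwn
      apply hnwalk
      obtain ⟨p, hp⟩ := hab
      refine ⟨p, fun hmem => ?_⟩
      rcases hp w hmem with h' | h'
      · exact hwn h'
      · rw [Set.mem_singleton_iff] at h'; exact hwu h'
    have hc : ¬(∃ p : G.Walk a u, w ∉ p.support) ∨ ¬(∃ p : G.Walk b u, w ∉ p.support) := by
      by_contra hcc
      push_neg at hcc
      obtain ⟨⟨p1, h1⟩, ⟨p2, h2⟩⟩ := hcc
      apply hnwalk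
      refine ⟨p1.append p2.reverse, fun hmem => ?_⟩
      rw [Walk.support_append, List.mem_append] at hmem
      rcases hmem with h' | h'
      · exact h1 h'
      · have := List.mem_of_mem_tail h'
        rw [Walk.support_reverse, List.mem_reverse] at this
        exact h2 this
    rcases hc with h' | h'
    · have hau : a ≠ u := by
        rintro rfl
        exact h' ⟨Walk.nil, by
          rw [Walk.support_nil, List.mem_singleton]
          exact hwu⟩
      have haC : a ∈ C := by
        rcases ha with h'' | h''
        · exact h''
        · rw [Set.mem_singleton_iff] at h''; exact absurd h'' hau
      exact Or.inr ⟨w, hwC, a, haC, haw, h'⟩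
    · have hbu : b ≠ u := by
        rintro rfl
        exact h' ⟨Walk.nil, by
          rw [Walk.support_nil, List.mem_singleton]
          exact hwu⟩
      have hbC : b ∈ C := by
        rcases hb with h'' | h''
        · exact h''
        · rw [Set.mem_singleton_iff] at h''; exact absurd h'' hbu
      exact Or.inr ⟨w, hwC, b, hbC, hbw, h'⟩
  · -- the bridge case
    push_neg at hY
    obtain ⟨e, he, hnred⟩ := hY
    revert he hnred
    refine Sym2.ind (fun x y => ?_) e
    intro he hnred
    have hadj : G.Adj x y := G.mem_edgeSet.mp he
    have hside : ∀ t : V, (G.deleteEdges {s(x,y)}).Reachable t x ∨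
        (G.deleteEdges {s(x,y)}).Reachable t y := by
      intro t
      obtain ⟨p⟩ := hconn.preconnected t x
      exact side_aux x y p (Or.inl rfl)
    have hsep : ¬ (G.deleteEdges {s(x,y)}).Reachable x y := by
      intro hxy
      apply hnred
      rcases hside a with h1 | h1 <;> rcases hside b with h2 | h2
      · exact h1.trans h2.symm
      · exact h1.trans (hxy.trans h2.symm)
      · exact h1.trans (hxy.symm.trans h2.symm)
      · exact h1.trans h2.symm
    obtain ⟨p, hp⟩ := hab
    have hE : s(x,y) ∈ p.edges := by
      by_contra hEn
      refine hnred ⟨p.toDeleteEdges _ ?_⟩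
      intro e' he'
      rw [Set.mem_singleton_iff]
      rintro rfl
      exact hEn he'
    have hxCU : x ∈ C ∪ {u} := hp x (Walk.fst_mem_support_of_mem_edges p hE)
    have hyCU : y ∈ C ∪ {u} := hp y (Walk.snd_mem_support_of_mem_edges p hE)
    rcases hside u with hux | huy
    · exact bridge_half hconn hsub hclosed hadj hyCU hsep hux
    · have h1 : s(y,x) = s(x,y) := Sym2.eq_swap
      have hsep' : ¬ (G.deleteEdges {s(y,x)}).Reachable y x := by
        rw [h1]; exact fun h => hsep h.symm
      have huy' : (G.deleteEdges {s(y,x)}).Reachable u y := by rw [h1]; exact huy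
      exact bridge_half hconn hsub hclosed hadj.symm hxCU hsep' huy'

lemma claimP (hconn : G.Connected) :
    ∀ (n : ℕ) (u : V) (C : Set V), C.ncard ≤ n → C ⊆ {x | x ≠ u} → C.Nonempty →
      (∀ a ∈ C, ∀ b ∈ C, ∃ p : G.Walk a b, ∀ x ∈ p.support, x ∈ C) →
      (∀ a ∈ C, ∀ b, b ≠ u → G.Adj a b → b ∈ C) →
      (∃ z, z ∉ C ∧ z ≠ u) →
      ∃ P, IsPendantBlock G P ∧ (P \ {u}).Nonempty ∧ P \ {u} ⊆ C := by
  classical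
  intro n
  induction n with
  | zero =>
    intro u C hcard _ hne _ _ _
    have := (Set.ncard_pos (Set.toFinite C)).mpr hne
    omega
  | succ n ih =>
    intro u C hcard hsub hne hwalk hclosed hout
    by_cases hbc : BiconnSet G (C ∪ {u})
    · have hpendant := pendant_of_biconn hconn hsub hne hclosed hout hbc
      have hCeq : (C ∪ {u}) \ {u} = C := by
        ext t
        simp only [Set.mem_diff, Set.mem_union, Set.mem_singleton_iff]
        constructor
        · rintro ⟨h1 | h1, h2⟩
          · exact h1
          · exact absurd h1 h2
        · intro ht
          exact ⟨Or.inl ht, hsub ht⟩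
      refine ⟨C ∪ {u}, hpendant, ?_, ?_⟩
      · rw [hCeq]; exact hne
      · rw [hCeq]
    · rcases step hconn hsub hwalk hclosed hbc with hdone | ⟨w, hwC, c, hcC, hcw, hcu⟩
      · exact hdone
      · set D : Set V := {z | ∃ p : G.Walk c z, w ∉ p.support} with hDdef
        have hDsub : D ⊆ C := by
          rintro z ⟨p, hp⟩
          by_cases hu' : u ∈ p.support
          · exact absurd ⟨p.takeUntil u hu',
              fun hmem => hp (Walk.support_takeUntil_subset _ _ hmem)⟩ hcu
          · exact mem_of_walk_closed hclosed p hcC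
              (fun x hx hxu => hu' (hxu ▸ hx)) z p.end_mem_support
        have hwD : w ∉ D := by rintro ⟨p, hp⟩; exact hp p.end_mem_support
        have hcard' : D.ncard ≤ n := by
          have := Set.ncard_lt_ncard ⟨hDsub, fun hCD => hwD (hCD hwC)⟩ (Set.toFinite C)
          omega
        have huw : u ≠ w := fun h => (hsub hwC) h.symm
        have hDwalk : ∀ a ∈ D, ∀ b ∈ D, ∃ p : G.Walk a b, ∀ x ∈ p.support, x ∈ D := by
          rintro z1 ⟨p1, hp1⟩ z2 ⟨p2, hp2⟩
          refine ⟨p1.reverse.append p2, ?_⟩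
          intro x hx
          rw [Walk.support_append, List.mem_append] at hx
          have hx' : x ∈ p1.support ∨ x ∈ p2.support := by
            rcases hx with h' | h'
            · rw [Walk.support_reverse, List.mem_reverse] at h'
              exact Or.inl h'
            · exact Or.inr (List.mem_of_mem_tail h')
          rcases hx' with h' | h'
          · exact ⟨p1.takeUntil x h', fun hmem => hp1 (Walk.support_takeUntil_subset _ _ hmem)⟩
          · exact ⟨p2.takeUntil x h', fun hmem => hp2 (Walk.support_takeUntil_subset _ _ hmem)⟩
        have hDclosed : ∀ a ∈ D, ∀ b, b ≠ w → G.Adj a b → b ∈ D := by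
          rintro z ⟨p, hp⟩ b hbw hA
          refine ⟨p.concat hA, ?_⟩
          rw [Walk.support_concat]
          intro hmem
          rcases List.mem_append.mp hmem with h' | h'
          · exact hp h'
          · rw [List.mem_singleton] at h'
            exact hbw h'.symm
        obtain ⟨P, hP, hPne, hPsub⟩ := ih w D hcard'
          (by rintro z ⟨p, hp⟩ h; exact hp (h ▸ p.end_mem_support))
          ⟨c, Walk.nil, by rw [Walk.support_nil, List.mem_singleton]; exact fun h => hcw h.symm⟩
          hDwalk hDclosed
          ⟨u, fun hu' => hcu (hu' : ∃ p : G.Walk c u, w ∉ p.support), huw⟩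
        have huP : u ∉ P := by
          intro huP
          have : u ∈ P \ {w} := ⟨huP, by rw [Set.mem_singleton_iff]; exact huw⟩
          rcases hPsub this with ⟨p, hp⟩
          exact hcu ⟨p, hp⟩
        refine ⟨P, hP, ?_, ?_⟩
        · obtain ⟨x, hx1, _⟩ := hPne
          exact ⟨x, hx1, fun hxu => huP ((Set.mem_singleton_iff.mp hxu) ▸ hx1)⟩
        · rintro x ⟨hxP, hxu⟩
          by_cases hxw : x = w
          · exact hxw ▸ hwC
          · exact hDsub (hPsub ⟨hxP, hxw⟩)

end Main


section Count
variable [Fintype V] {G : SimpleGraph V}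

lemma Cset_sub (u : V) (c : (G.induce {x | x ≠ u}).ConnectedComponent) :
    Subtype.val '' c.supp ⊆ {x | x ≠ u} := by
  rintro _ ⟨⟨x, hx⟩, _, rfl⟩
  exact hx

lemma mem_Cset (u : V) (c : (G.induce {x | x ≠ u}).ConnectedComponent)
    {x : V} (hx : x ≠ u) :
    x ∈ Subtype.val '' c.supp ↔ (G.induce {x | x ≠ u}).connectedComponentMk ⟨x, hx⟩ = c := by
  constructor
  · rintro ⟨x', hx', hval⟩
    have : x' = ⟨x, hx⟩ := Subtype.ext hval
    exact this ▸ ((ConnectedComponent.mem_supp_iff c x').mp hx')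
  · intro h
    exact ⟨⟨x, hx⟩, (ConnectedComponent.mem_supp_iff c _).mpr h, rfl⟩

lemma Cset_closed (u : V) (c : (G.induce {x | x ≠ u}).ConnectedComponent) :
    ∀ a ∈ Subtype.val '' c.supp, ∀ b, b ≠ u → G.Adj a b → b ∈ Subtype.val '' c.supp := by
  rintro _ ⟨⟨a, ha⟩, haS, rfl⟩ b hb hA
  have hA' : (G.induce {x | x ≠ u}).Adj ⟨b, hb⟩ ⟨a, ha⟩ := hA.symm
  refine (mem_Cset u c hb).mpr ?_
  rw [ConnectedComponent.sound hA'.reachable]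
  exact (ConnectedComponent.mem_supp_iff c _).mp haS

lemma Cset_walk (u : V) (c : (G.induce {x | x ≠ u}).ConnectedComponent) :
    ∀ a ∈ Subtype.val '' c.supp, ∀ b ∈ Subtype.val '' c.supp,
      ∃ p : G.Walk a b, ∀ x ∈ p.support, x ∈ Subtype.val '' c.supp := by
  classical
  rintro _ ⟨a', ha', rfl⟩ _ ⟨b', hb', rfl⟩
  have hr : (G.induce {x | x ≠ u}).Reachable a' b' :=
    ConnectedComponent.exact (((ConnectedComponent.mem_supp_iff c a').mp ha').trans
      (((ConnectedComponent.mem_supp_iff c b').mp hb')).symm)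
  obtain ⟨q⟩ := hr
  refine ⟨q.map (ivHom G _), ?_⟩
  intro x hx
  change x ∈ (q.map (ivHom G _)).support at hx
  rw [Walk.support_map] at hx
  obtain ⟨x', hx', rfl⟩ := List.mem_map.mp hx
  refine ⟨x', ?_, rfl⟩
  rw [ConnectedComponent.mem_supp_iff]
  have : (G.induce {x | x ≠ u}).Reachable a' x' := ⟨q.takeUntil x' hx'⟩
  rw [← ConnectedComponent.sound this]
  exact (ConnectedComponent.mem_supp_iff c a').mp ha'

lemma exists_pendant_comp (hconn : G.Connected) {u v : V} (hvu : v ≠ u)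
    (c : (G.induce {x | x ≠ u}).ConnectedComponent)
    (hc : c ≠ (G.induce {x | x ≠ u}).connectedComponentMk ⟨v, hvu⟩) :
    ∃ P, IsPendantBlock G P ∧ (P \ {u}).Nonempty ∧ P \ {u} ⊆ Subtype.val '' c.supp := by
  have hne : (Subtype.val '' c.supp).Nonempty := by
    obtain ⟨x, hx⟩ := c.exists_rep
    exact ⟨x.val, x, (ConnectedComponent.mem_supp_iff c x).mpr hx, rfl⟩
  have hvC : v ∉ Subtype.val '' c.supp := by
    intro hv
    exact hc ((mem_Cset u c hvu).mp hv).symm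
  exact claimP hconn (Subtype.val '' c.supp).ncard u _ le_rfl (Cset_sub u c) hne
    (Cset_walk u c) (Cset_closed u c) ⟨v, hvC, hvu⟩

lemma cross_case (hconn : G.Connected) {u v : V} (huv : u ≠ v)
    {c : (G.induce {x | x ≠ u}).ConnectedComponent}
    (hc : c ≠ (G.induce {x | x ≠ u}).connectedComponentMk ⟨v, Ne.symm huv⟩)
    {c' : (G.induce {x | x ≠ v}).ConnectedComponent}
    (hc' : c' ≠ (G.induce {x | x ≠ v}).connectedComponentMk ⟨u, huv⟩)
    {P : Set V} (hPne : (P \ {u}).Nonempty) (hPu : P \ {u} ⊆ Subtype.val '' c.supp)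
    (hPv : P \ {v} ⊆ Subtype.val '' c'.supp) : False := by
  have hvC : v ∉ Subtype.val '' c.supp := fun hv =>
    hc ((mem_Cset u c (Ne.symm huv)).mp hv).symm
  have huC' : u ∉ Subtype.val '' c'.supp := fun hu =>
    hc' ((mem_Cset v c' huv).mp hu).symm
  by_cases huP : u ∈ P
  · exact huC' (hPv ⟨huP, by rw [Set.mem_singleton_iff]; exact huv⟩)
  · have hvP : v ∉ P := by
      intro hvP
      exact hvC (hPu ⟨hvP, by rw [Set.mem_singleton_iff]; exact Ne.symm huv⟩)
    obtain ⟨x, hxP, hxu⟩ := hPne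
    have hxC : x ∈ Subtype.val '' c.supp := hPu ⟨hxP, hxu⟩
    have hxC' : x ∈ Subtype.val '' c'.supp :=
      hPv ⟨hxP, by rw [Set.mem_singleton_iff]; rintro rfl; exact hvP hxP⟩
    obtain ⟨p0⟩ := hconn.preconnected x u
    obtain ⟨q, hq⟩ := walk_to_center p0 (Cset_sub u c) (Cset_closed u c) hxC
    have hqv : ∀ z ∈ q.support, z ≠ v := by
      intro z hz
      rintro rfl
      rcases hq z hz with h' | h'
      · exact hvC h'
      · rw [Set.mem_singleton_iff] at h'
        exact huv h'.symm
    exact huC' (mem_of_walk_closed (Cset_closed v c') q hxC' hqv u q.end_mem_support)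

lemma card_le_one_add {α : Type*} [Finite α] (a0 : α) :
    Nat.card α ≤ 1 + Nat.card {a : α // a ≠ a0} := by
  classical
  have h := Nat.card_congr (Equiv.sumCompl (fun a : α => a = a0))
  rw [Nat.card_sum, Nat.card_unique] at h
  have h2 : Nat.card {a : α // ¬ a = a0} = Nat.card {a : α // a ≠ a0} := rfl
  omega

lemma key_count (hconn : G.Connected) {u v : V} (huv : u ≠ v) :
    Dnum G u + Dnum G v ≤ (pendantBlocks G).ncard + 2 := by
  classical
  have hDnum : ∀ w : V, Dnum G w = Nat.card ((G.induce {x | x ≠ w}).ConnectedComponent) := by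
    intro w
    have hset : {v' | G.Reachable w v' ∧ v' ≠ w} = {x | x ≠ w} :=
      Set.ext fun x => ⟨fun h => h.2, fun h => ⟨hconn.preconnected w x, h⟩⟩
    rw [Dnum, hset]
  set c0u := (G.induce {x | x ≠ u}).connectedComponentMk ⟨v, Ne.symm huv⟩ with hc0u
  set c0v := (G.induce {x | x ≠ v}).connectedComponentMk ⟨u, huv⟩ with hc0v
  have h1 : Dnum G u ≤ 1 + Nat.card {c : (G.induce {x | x ≠ u}).ConnectedComponent // c ≠ c0u} := by
    rw [hDnum u]; exact card_le_one_add c0u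
  have h2 : Dnum G v ≤ 1 + Nat.card {c : (G.induce {x | x ≠ v}).ConnectedComponent // c ≠ c0v} := by
    rw [hDnum v]; exact card_le_one_add c0v
  have hex1 := fun (c : {c : (G.induce {x | x ≠ u}).ConnectedComponent // c ≠ c0u}) =>
    exists_pendant_comp hconn (Ne.symm huv) c.1 c.2
  have hex2 := fun (c : {c : (G.induce {x | x ≠ v}).ConnectedComponent // c ≠ c0v}) =>
    exists_pendant_comp hconn huv c.1 c.2
  choose F1 hF1p hF1ne hF1s using hex1
  choose F2 hF2p hF2ne hF2s using hex2
  have hkey : Nat.card {c : (G.induce {x | x ≠ u}).ConnectedComponent // c ≠ c0u}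
      + Nat.card {c : (G.induce {x | x ≠ v}).ConnectedComponent // c ≠ c0v}
      ≤ (pendantBlocks G).ncard := by
    have hinj : Function.Injective (Sum.elim
        (fun c : {c : (G.induce {x | x ≠ u}).ConnectedComponent // c ≠ c0u} =>
          (⟨F1 c, hF1p c⟩ : ↥(pendantBlocks G)))
        (fun c : {c : (G.induce {x | x ≠ v}).ConnectedComponent // c ≠ c0v} =>
          (⟨F2 c, hF2p c⟩ : ↥(pendantBlocks G)))) := by
      rintro (c | c) (c' | c') h
      · simp only [Sum.elim_inl, Subtype.mk_eq_mk] at h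
        have h : F1 c = F1 c' := congrArg Subtype.val h
        obtain ⟨x, hx1, hx2⟩ := hF1ne c
        have hxc : x ∈ Subtype.val '' c.1.supp := hF1s c ⟨hx1, hx2⟩
        have hxc' : x ∈ Subtype.val '' c'.1.supp := hF1s c' ⟨h ▸ hx1, hx2⟩
        have hxu : x ≠ u := Cset_sub u c.1 hxc
        congr 1
        refine Subtype.ext ?_
        rw [← (mem_Cset u c.1 hxu).mp hxc, ← (mem_Cset u c'.1 hxu).mp hxc']
      · exfalso
        simp only [Sum.elim_inl, Sum.elim_inr, Subtype.mk_eq_mk] at h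
        have h : F1 c = F2 c' := congrArg Subtype.val h
        refine cross_case hconn huv c.2 c'.2 (hF1ne c) (hF1s c) ?_
        rw [h]; exact hF2s c'
      · exfalso
        simp only [Sum.elim_inl, Sum.elim_inr, Subtype.mk_eq_mk] at h
        have h : F2 c = F1 c' := congrArg Subtype.val h
        refine cross_case hconn huv c'.2 c.2 (hF1ne c') (hF1s c') ?_
        rw [← h]; exact hF2s c
      · simp only [Sum.elim_inr, Subtype.mk_eq_mk] at h
        have h : F2 c = F2 c' := congrArg Subtype.val h
        obtain ⟨x, hx1, hx2⟩ := hF2ne c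
        have hxc : x ∈ Subtype.val '' c.1.supp := hF2s c ⟨hx1, hx2⟩
        have hxc' : x ∈ Subtype.val '' c'.1.supp := hF2s c' ⟨h ▸ hx1, hx2⟩
        have hxv : x ≠ v := Cset_sub v c.1 hxc
        congr 1
        refine Subtype.ext ?_
        rw [← (mem_Cset v c.1 hxv).mp hxc, ← (mem_Cset v c'.1 hxv).mp hxc']
    calc Nat.card {c : (G.induce {x | x ≠ u}).ConnectedComponent // c ≠ c0u}
          + Nat.card {c : (G.induce {x | x ≠ v}).ConnectedComponent // c ≠ c0v}
        = Nat.card ({c : (G.induce {x | x ≠ u}).ConnectedComponent // c ≠ c0u} ⊕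
            {c : (G.induce {x | x ≠ v}).ConnectedComponent // c ≠ c0v}) := by
          rw [Nat.card_sum]
      _ ≤ Nat.card ↥(pendantBlocks G) := Nat.card_le_card_of_injective _ hinj
      _ = (pendantBlocks G).ncard := Nat.card_coe_set_eq _
  omega

lemma matching_le (G : SimpleGraph V) (A B : Set V) (Λ' : Set (Set V)) :
    2 * maxMatching G A B Λ' ≤ Λ'.ncard := by
  classical
  have hbound : ∀ k ∈ {k | ∃ N, IsLegalMatching G A B Λ' N ∧ N.ncard = k}, k ≤ Λ'.ncard / 2 := by
    rintro k ⟨N, hN, rfl⟩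
    have h2 : 2 * N.ncard ≤ Λ'.ncard := by
      have hinj : Function.Injective (Sum.elim
          (fun q : ↥N => (⟨q.1.1, (hN.1 q.1 q.2).1⟩ : ↥Λ'))
          (fun q : ↥N => (⟨q.1.2, (hN.1 q.1 q.2).2.1⟩ : ↥Λ'))) := by
        have hdisj : ∀ (q q' : ↥N), (q : Set V × Set V) ≠ q' →
            ∀ S, S ∈ ({(q : Set V × Set V).1, (q : Set V × Set V).2} : Set (Set V)) →
              S ∈ ({(q' : Set V × Set V).1, (q' : Set V × Set V).2} : Set (Set V)) → False := by
          intro q q' hne S hS hS'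
          have := hN.2 q.1 q.2 q'.1 q'.2 hne
          have hmem : S ∈ ({(q : Set V × Set V).1, (q : Set V × Set V).2} ∩
              {(q' : Set V × Set V).1, (q' : Set V × Set V).2} : Set (Set V)) := ⟨hS, hS'⟩
          rw [this] at hmem
          exact hmem
        rintro (q | q) (q' | q') h <;>
          simp only [Sum.elim_inl, Sum.elim_inr, Subtype.mk_eq_mk] at h
        · by_cases hqq : (q : Set V × Set V) = q'
          · congr 1; exact Subtype.ext hqq
          · exact (hdisj q q' hqq _ (Or.inl rfl) (Or.inl h)).elim
        · exfalso
          by_cases hqq : (q : Set V × Set V) = q'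
          · rw [← hqq] at h
            exact (hN.1 q.1 q.2).2.2.2.2.1 h
          · exact hdisj q q' hqq _ (Or.inl rfl) (Or.inr h)
        · exfalso
          by_cases hqq : (q : Set V × Set V) = q'
          · rw [← hqq] at h
            exact (hN.1 q.1 q.2).2.2.2.2.1 h.symm
          · exact hdisj q q' hqq _ (Or.inr rfl) (Or.inl h)
        · by_cases hqq : (q : Set V × Set V) = q'
          · congr 1; exact Subtype.ext hqq
          · exact (hdisj q q' hqq _ (Or.inr rfl) (Or.inr h)).elim
      calc 2 * N.ncard = Nat.card (↥N ⊕ ↥N) := by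
            rw [Nat.card_sum, Nat.card_coe_set_eq]; omega
        _ ≤ Nat.card ↥Λ' := Nat.card_le_card_of_injective _ hinj
        _ = Λ'.ncard := Nat.card_coe_set_eq _
    omega
  have hne : {k | ∃ N, IsLegalMatching G A B Λ' N ∧ N.ncard = k}.Nonempty := by
    refine ⟨0, ∅, ⟨?_, ?_⟩, Set.ncard_empty _⟩
    · rintro q hq; exact absurd hq (Set.notMem_empty q)
    · rintro q hq; exact absurd hq (Set.notMem_empty q)
  have := csSup_le hne hbound
  rw [maxMatching]
  omega

end Count


theorem stmt_16 [Fintype V] (G : SimpleGraph V) (A B : Set V)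
    (hdisj : Disjoint A B) (hcov : A ∪ B = Set.univ)
    (hbip : ∀ u v : V, G.Adj u v → (u ∈ A ∧ v ∈ B) ∨ (u ∈ B ∧ v ∈ A))
    (hconn : G.Connected) (hcard : 3 < (pendantBlocks G).ncard) :
    {u : V | Massive G A B u}.ncard ≤ 1 ∧
    ((∃ u : V, Massive G A B u) → ∀ v : V, ¬Critical G A B v) := by
  classical
  have hM := matching_le G A B (pendantBlocks G)
  have hR : Rnum G A B (pendantBlocks G) =
      (pendantBlocks G).ncard - 2 * maxMatching G A B (pendantBlocks G) := rfl
  constructor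
  · rw [Set.ncard_le_one (Set.toFinite _)]
    intro a ha b hb
    by_contra hab
    obtain ⟨_, h1⟩ := ha
    obtain ⟨_, h2⟩ := hb
    have hk := key_count hconn (hab : a ≠ b)
    omega
  · rintro ⟨u, hu⟩ v hv
    obtain ⟨_, h1⟩ := hu
    obtain ⟨_, h2⟩ := hv
    by_cases h : u = v
    · subst h; omega
    · have hk := key_count hconn h
      omega

end
end AugBic
end
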